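/- arXiv:1007.1693 — 3 statements merged into one kernel-verified Lean document; each statement's English description precedes it below -/
import Mathlib

section
/- For any homotopy data (α, τ, S) and any r ≥ 1, the group G_1(α,τ,S,r) is isomorphic to Z ⊕ ⨁_{1 ≤ i < j ≤ r} π, where π is the abelian group generated by α with relations a + τ(a) = 0. -/
open List

attribute [local instance] Classical.propDecidable

/-- A symbol in a nanophrase: either a separator `none` or a letter occurrence
`some (x, a)` where `x` is the letter's name and `a` its label in `α`. -/
abbrev NSym (α : Type) := Option (ℕ × α)

/-- A phrase: list of symbols; `none` separates components. -/
abbrev NPhrase (α : Type) := List (NSym α)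

/-- The list of letter occurrences of a phrase. -/
def occs {α : Type} (p : NPhrase α) : List (ℕ × α) := p.filterMap id

/-- The set of (names of) letters appearing in a phrase. -/
def lettersOf {α : Type} (p : NPhrase α) : Finset ℕ := ((occs p).map Prod.fst).toFinset

/-- The rank: number of distinct letters. -/
def rank {α : Type} (p : NPhrase α) : ℕ := (lettersOf p).card

/-- A nanophrase: each letter appears exactly twice, with a consistent label. -/
def IsNano {α : Type} (p : NPhrase α) : Prop :=
  (∀ x ∈ lettersOf p, ((occs p).map Prod.fst).count x = 2) ∧
  (∀ x a b, (x, a) ∈ occs p → (x, b) ∈ occs p → a = b)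

/-- The number of components of a phrase. -/
def comps {α : Type} (p : NPhrase α) : ℕ := p.countP (fun s => s.isNone) + 1

/-- The subphrase with letter set restricted to `T`. -/
def restrict {α : Type} (p : NPhrase α) (T : Finset ℕ) : NPhrase α :=
  p.filter (fun s => match s with | none => true | some (x, _) => decide (x ∈ T))

/-- Isomorphism of (nano)phrases: a renaming of letters preserving labels. -/
def Iso {α : Type} (p q : NPhrase α) : Prop :=
  ∃ σ : ℕ ≃ ℕ, p.map (Option.map (fun xa => (σ xa.1, xa.2))) = q

/-- Angle bracket: the number of subphrases of `p` isomorphic to `q`. -/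
noncomputable def bracketN {α : Type} (q p : NPhrase α) : ℕ :=
  ((lettersOf p).powerset.filter (fun T => Iso (restrict p T) q)).card

/-- Homotopy moves for homotopy data `(α, τ, S)`. -/
inductive HMove {α : Type} (τ : α → α) (S : Set (α × α × α)) : NPhrase α → NPhrase α → Prop
  | h1 (x y : NPhrase α) (i : ℕ) (a : α) :
      HMove τ S (x ++ [some (i,a), some (i,a)] ++ y) (x ++ y)
  | h2 (x y z : NPhrase α) (i j : ℕ) (a b : α) (h : a = τ b) :
      HMove τ S (x ++ [some (i,a), some (j,b)] ++ y ++ [some (j,b), some (i,a)] ++ z)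
        (x ++ y ++ z)
  | h3 (x y z t : NPhrase α) (i j k : ℕ) (a b c : α) (h : (a,b,c) ∈ S) :
      HMove τ S
        (x ++ [some (i,a), some (j,b)] ++ y ++ [some (i,a), some (k,c)] ++ z
           ++ [some (j,b), some (k,c)] ++ t)
        (x ++ [some (j,b), some (i,a)] ++ y ++ [some (k,c), some (i,a)] ++ z
           ++ [some (k,c), some (j,b)] ++ t)

/-- Homotopy: equivalence generated by isomorphism and the moves H1, H2, H3. -/
def Homotopic {α : Type} (τ : α → α) (S : Set (α × α × α)) : NPhrase α → NPhrase α → Prop :=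
  Relation.EqvGen (fun p q => HMove τ S p q ∨ Iso p q)

/-- Build a phrase from a list of components. -/
def ofComponents {α : Type} (L : List (List (ℕ × α))) : NPhrase α :=
  ((L.map (fun c => c.map some)).intersperse [none]).flatten

/-- The generators: `r`-component nanophrases over α. -/
def NP (α : Type) (r : ℕ) := {p : NPhrase α // IsNano p ∧ comps p = r}

open FreeAbelianGroup in
/-- The relations defining `G_n(α,τ,S,r)`: identification of isomorphic
nanophrases, the relations coming from the homotopy moves H1, H2, H3, and the
vanishing of all nanophrases of rank greater than `n`. -/
def relSet {α : Type} (τ : α → α) (S : Set (α × α × α)) (r n : ℕ) :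
    Set (FreeAbelianGroup (NP α r)) :=
  {g | ∃ p q : NP α r, Iso p.1 q.1 ∧ g = of p - of q} ∪
  {g | ∃ (p : NP α r) (x y : NPhrase α) (i : ℕ) (a : α),
        p.1 = x ++ [some (i,a), some (i,a)] ++ y ∧ g = of p} ∪
  {g | ∃ (p q q' : NP α r) (x y z : NPhrase α) (i j : ℕ) (a b : α),
        a = τ b ∧
        p.1 = x ++ [some (i,a), some (j,b)] ++ y ++ [some (j,b), some (i,a)] ++ z ∧
        q.1 = x ++ [some (i,a)] ++ y ++ [some (i,a)] ++ z ∧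
        q'.1 = x ++ [some (j,b)] ++ y ++ [some (j,b)] ++ z ∧
        g = of p + of q + of q'} ∪
  {g | ∃ (p1 p2 p3 p4 q1 q2 q3 q4 : NP α r) (x y z t : NPhrase α)
        (i j k : ℕ) (a b c : α) (A B C : NSym α),
        (a,b,c) ∈ S ∧ A = some (i,a) ∧ B = some (j,b) ∧ C = some (k,c) ∧
        p1.1 = x ++ [A,B] ++ y ++ [A,C] ++ z ++ [B,C] ++ t ∧
        p2.1 = x ++ [A,B] ++ y ++ [A] ++ z ++ [B] ++ t ∧
        p3.1 = x ++ [A] ++ y ++ [A,C] ++ z ++ [C] ++ t ∧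
        p4.1 = x ++ [B] ++ y ++ [C] ++ z ++ [B,C] ++ t ∧
        q1.1 = x ++ [B,A] ++ y ++ [C,A] ++ z ++ [C,B] ++ t ∧
        q2.1 = x ++ [B,A] ++ y ++ [A] ++ z ++ [B] ++ t ∧
        q3.1 = x ++ [A] ++ y ++ [C,A] ++ z ++ [C] ++ t ∧
        q4.1 = x ++ [B] ++ y ++ [C] ++ z ++ [C,B] ++ t ∧
        g = of p1 + of p2 + of p3 + of p4 - of q1 - of q2 - of q3 - of q4} ∪
  {g | ∃ p : NP α r, n < rank p.1 ∧ g = of p}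

/-- The group `G_n(α,τ,S,r)`, image of a universal degree-`n` invariant. -/
abbrev Gn (α : Type) (τ : α → α) (S : Set (α × α × α)) (r n : ℕ) :=
  FreeAbelianGroup (NP α r) ⧸ AddSubgroup.closure (relSet τ S r n)

/-- The group π: generated by α with relations a + τ(a) = 0. -/
def piRel {α : Type} (τ : α → α) : AddSubgroup (FreeAbelianGroup α) :=
  AddSubgroup.closure {g | ∃ a, g = FreeAbelianGroup.of a + FreeAbelianGroup.of (τ a)}

abbrev PiGrp {α : Type} (τ : α → α) := FreeAbelianGroup α ⧸ piRel τ

namespace G1Aux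

open FreeAbelianGroup

variable {α : Type}

/-! ### Basic lemmas about `occs` and counting separators -/

@[simp] lemma occs_nil : occs ([] : NPhrase α) = [] := rfl
@[simp] lemma occs_cons_none (l : NPhrase α) : occs (none :: l) = occs l := rfl
@[simp] lemma occs_cons_some (xa : ℕ × α) (l : NPhrase α) :
    occs (some xa :: l) = xa :: occs l := rfl
@[simp] lemma occs_append (x y : NPhrase α) : occs (x ++ y) = occs x ++ occs y :=
  List.filterMap_append
@[simp] lemma occs_replicate (k : ℕ) : occs (List.replicate k (none : NSym α)) = [] := by
  induction k with
  | zero => rfl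
  | succ n ih => simpa [List.replicate_succ] using ih

def nones (p : NPhrase α) : ℕ := p.countP (fun s => s.isNone)

@[simp] lemma nones_nil : nones ([] : NPhrase α) = 0 := rfl
@[simp] lemma nones_cons_none (l : NPhrase α) : nones (none :: l) = nones l + 1 := by
  simp [nones, List.countP_cons]
@[simp] lemma nones_cons_some (xa : ℕ × α) (l : NPhrase α) :
    nones (some xa :: l) = nones l := by
  simp [nones, List.countP_cons]
@[simp] lemma nones_append (x y : NPhrase α) : nones (x ++ y) = nones x + nones y := by
  simp [nones, List.countP_append]
@[simp] lemma nones_replicate (k : ℕ) : nones (List.replicate k (none : NSym α)) = k := by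
  induction k with
  | zero => rfl
  | succ n ih => simp [List.replicate_succ, ih]

lemma comps_eq (p : NPhrase α) : comps p = nones p + 1 := rfl

lemma eq_replicate_of_occs_nil {l : NPhrase α} (h : occs l = []) :
    l = List.replicate l.length none := by
  induction l with
  | nil => rfl
  | cons s t ih =>
    cases s with
    | none =>
      simp only [occs_cons_none] at h
      simpa [List.replicate_succ] using ih h
    | some xa => simp at h

lemma exists_decomp {l : NPhrase α} {u : ℕ × α} {rest : List (ℕ × α)}
    (h : occs l = u :: rest) :
    ∃ l1 l2 : NPhrase α, occs l1 = [] ∧ l = l1 ++ some u :: l2 ∧ occs l2 = rest := by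
  induction l with
  | nil => simp at h
  | cons s t ih =>
    cases s with
    | none =>
      simp only [occs_cons_none] at h
      obtain ⟨l1, l2, h1, h2, h3⟩ := ih h
      exact ⟨none :: l1, l2, by simp [h1], by simp [h2], h3⟩
    | some xa =>
      simp only [occs_cons_some, List.cons.injEq] at h
      obtain ⟨rfl, rfl⟩ := h
      exact ⟨[], t, rfl, rfl, rfl⟩

lemma occs_length_eq {p : NPhrase α} (h : IsNano p) :
    (occs p).length = 2 * rank p := by
  have hsum : ∑ x ∈ ((occs p).map Prod.fst).toFinset, ((occs p).map Prod.fst).count x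
      = ((occs p).map Prod.fst).length := by
    simpa using Multiset.toFinset_sum_count_eq (((occs p).map Prod.fst : List ℕ) : Multiset ℕ)
  have hc : ∀ x ∈ ((occs p).map Prod.fst).toFinset,
      ((occs p).map Prod.fst).count x = 2 := fun x hx => h.1 x hx
  rw [← List.length_map (as := occs p) (f := Prod.fst), ← hsum, Finset.sum_congr rfl hc,
    Finset.sum_const]
  show rank p • 2 = 2 * rank p
  simp [mul_comm]

/-! ### The `key` of a phrase -/

def key : ℕ → NPhrase α → List (ℕ × α)
  | _, [] => []
  | c, none :: l => key (c+1) l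
  | c, some xa :: l => (c, xa.2) :: key c l

@[simp] lemma key_nil (c : ℕ) : key c ([] : NPhrase α) = [] := rfl
@[simp] lemma key_cons_none (c : ℕ) (l : NPhrase α) : key c (none :: l) = key (c+1) l := rfl
@[simp] lemma key_cons_some (c : ℕ) (xa : ℕ × α) (l : NPhrase α) :
    key c (some xa :: l) = (c, xa.2) :: key c l := rfl

lemma key_append (c : ℕ) (x y : NPhrase α) :
    key c (x ++ y) = key c x ++ key (c + nones x) y := by
  induction x generalizing c with
  | nil => simp
  | cons s t ih =>
    cases s with
    | none =>
      have harith : c + (nones t + 1) = (c + 1) + nones t := by omega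
      simp only [List.cons_append, key_cons_none, ih, nones_cons_none, harith]
    | some xa => simp [ih]

@[simp] lemma key_replicate (c k : ℕ) : key c (List.replicate k (none : NSym α)) = [] := by
  induction k generalizing c with
  | zero => rfl
  | succ n ih => simp [List.replicate_succ, ih]

lemma key_length (c : ℕ) (l : NPhrase α) : (key c l).length = (occs l).length := by
  induction l generalizing c with
  | nil => rfl
  | cons s t ih => cases s <;> simp [ih]

lemma key_map (σ : ℕ → ℕ) (c : ℕ) (l : NPhrase α) :
    key c (l.map (Option.map (fun xa => (σ xa.1, xa.2)))) = key c l := by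
  induction l generalizing c with
  | nil => rfl
  | cons s t ih => cases s <;> simp [ih]

lemma key_eq_nil_of_occs_nil {l : NPhrase α} (h : occs l = []) (c : ℕ) : key c l = [] :=
  List.length_eq_zero_iff.mp (by rw [key_length, h]; rfl)

/-! ### Nanophrase builders -/

lemma isNano_of_occs_two (p : NPhrase α) (x : ℕ) (a : α)
    (h : occs p = [(x,a),(x,a)]) : IsNano p := by
  constructor
  · intro y hy
    have hm : ((occs p).map Prod.fst) = [x, x] := by rw [h]; rfl
    have hy' : y ∈ (([x, x] : List ℕ)).toFinset := by
      simpa [lettersOf, hm] using hy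
    simp at hy'
    subst hy'
    simp [hm, List.count_cons]
  · intro y b c hb hc
    rw [h] at hb hc
    simp at hb hc
    rw [hb.2, hc.2]

lemma isNano_of_occs_four (p : NPhrase α) (x1 x2 : ℕ) (a1 a2 : α)
    (hne : x1 ≠ x2) (h : occs p = [(x1,a1),(x2,a2),(x2,a2),(x1,a1)]) : IsNano p := by
  constructor
  · intro y hy
    have hm : ((occs p).map Prod.fst) = [x1, x2, x2, x1] := by rw [h]; rfl
    have hy' : y ∈ (([x1, x2, x2, x1] : List ℕ)).toFinset := by
      simpa [lettersOf, hm] using hy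
    simp at hy'
    rw [hm]
    rcases hy' with rfl | rfl
    · simp [List.count_cons, hne, Ne.symm hne]
    · simp [List.count_cons, hne, Ne.symm hne]
  · intro y b c hb hc
    rw [h] at hb hc
    have hkey : ∀ {d : α}, (y, d) ∈ ([(x1,a1),(x2,a2),(x2,a2),(x1,a1)] : List (ℕ × α)) →
        d = if y = x1 then a1 else a2 := by
      intro d hd
      simp only [List.mem_cons, List.not_mem_nil, or_false, Prod.mk.injEq] at hd
      rcases hd with ⟨rfl, rfl⟩ | ⟨rfl, rfl⟩ | ⟨rfl, rfl⟩ | ⟨rfl, rfl⟩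
      · simp
      · simp [Ne.symm hne]
      · simp [Ne.symm hne]
      · simp
    rw [hkey hb, hkey hc]

/-! ### Canonical nanophrases -/

def Elist (r : ℕ) : NPhrase α := List.replicate (r-1) none

lemma isNano_Elist (r : ℕ) : IsNano (Elist (α := α) r) := by
  constructor
  · intro x hx
    simp [lettersOf, Elist] at hx
  · intro x a b ha _
    simp [Elist] at ha

def Enp (r : ℕ) (hr : 1 ≤ r) : NP α r :=
  ⟨Elist r, isNano_Elist r, by rw [comps_eq]; simp [Elist]; omega⟩

def Dlist (r i j nm : ℕ) (a : α) : NPhrase α :=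
  List.replicate i none ++ some (nm, a) ::
    (List.replicate (j - i) none ++ some (nm, a) :: List.replicate (r - 1 - j) none)

lemma occs_Dlist (r i j nm : ℕ) (a : α) :
    occs (Dlist r i j nm a) = [(nm,a),(nm,a)] := by simp [Dlist]

lemma isNano_Dlist (r i j nm : ℕ) (a : α) : IsNano (Dlist r i j nm a) :=
  isNano_of_occs_two _ _ _ (occs_Dlist r i j nm a)

lemma comps_Dlist (r i j nm : ℕ) (a : α) (hij : i ≤ j) (hjr : j < r) :
    comps (Dlist r i j nm a) = r := by
  rw [comps_eq]; simp [Dlist]; omega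

lemma key_Dlist (r i j nm : ℕ) (a : α) (hij : i ≤ j) :
    key 0 (Dlist r i j nm a) = [(i, a), (j, a)] := by
  simp [Dlist, key_append, Nat.add_sub_cancel' hij]

def Dnp (r : ℕ) (ij : {ij : Fin r × Fin r // ij.1 < ij.2}) (a : α) : NP α r :=
  ⟨Dlist r ij.1.1.1 ij.1.2.1 0 a, isNano_Dlist _ _ _ _ _,
    comps_Dlist _ _ _ _ _ (le_of_lt ij.2) ij.1.2.isLt⟩

/-! ### The target group and `π` -/

abbrev MG (τ : α → α) (r : ℕ) : Type :=
  ℤ × ({ij : Fin r × Fin r // ij.1 < ij.2} → PiGrp τ)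

noncomputable instance (r : ℕ) : Fintype {ij : Fin r × Fin r // ij.1 < ij.2} :=
  Fintype.ofFinite _

def piOf (τ : α → α) (a : α) : PiGrp τ := QuotientAddGroup.mk (FreeAbelianGroup.of a)

lemma piOf_add_tau (τ : α → α) (a : α) : piOf τ a + piOf τ (τ a) = 0 := by
  have h : ((FreeAbelianGroup.of a + FreeAbelianGroup.of (τ a) : FreeAbelianGroup α) :
      PiGrp τ) = 0 :=
    (QuotientAddGroup.eq_zero_iff _).mpr (AddSubgroup.subset_closure ⟨a, rfl⟩)
  simpa [piOf] using h

variable (τ : α → α) (S : Set (α × α × α)) (r : ℕ)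

/-! ### The quotient map and the relations -/

noncomputable def mkG : FreeAbelianGroup (NP α r) →+ Gn α τ S r 1 :=
  QuotientAddGroup.mk' (AddSubgroup.closure (relSet τ S r 1))

lemma mkG_eq_zero {g : FreeAbelianGroup (NP α r)} (h : g ∈ relSet τ S r 1) :
    mkG τ S r g = 0 :=
  (QuotientAddGroup.eq_zero_iff _).mpr (AddSubgroup.subset_closure h)

lemma mkG_iso {p q : NP α r} (h : Iso p.1 q.1) :
    mkG τ S r (of p) = mkG τ S r (of q) := by
  have h0 : mkG τ S r (of p - of q) = 0 :=
    mkG_eq_zero τ S r (Or.inl (Or.inl (Or.inl (Or.inl ⟨p, q, h, rfl⟩))))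
  rw [map_sub, sub_eq_zero] at h0
  exact h0

lemma mkG_h1 {p : NP α r} {x y : NPhrase α} {i : ℕ} {a : α}
    (h : p.1 = x ++ [some (i,a), some (i,a)] ++ y) : mkG τ S r (of p) = 0 :=
  mkG_eq_zero τ S r (Or.inl (Or.inl (Or.inl (Or.inr ⟨p, x, y, i, a, h, rfl⟩))))

lemma mkG_h2 {p q q' : NP α r} {x y z : NPhrase α} {i j : ℕ} {a b : α}
    (hab : a = τ b)
    (hp : p.1 = x ++ [some (i,a), some (j,b)] ++ y ++ [some (j,b), some (i,a)] ++ z)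
    (hq : q.1 = x ++ [some (i,a)] ++ y ++ [some (i,a)] ++ z)
    (hq' : q'.1 = x ++ [some (j,b)] ++ y ++ [some (j,b)] ++ z) :
    mkG τ S r (of p) + mkG τ S r (of q) + mkG τ S r (of q') = 0 := by
  have h0 : mkG τ S r (of p + of q + of q') = 0 :=
    mkG_eq_zero τ S r (Or.inl (Or.inl (Or.inr
      ⟨p, q, q', x, y, z, i, j, a, b, hab, hp, hq, hq', rfl⟩)))
  simpa [map_add] using h0

lemma mkG_rank {p : NP α r} (h : 1 < rank p.1) : mkG τ S r (of p) = 0 :=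
  mkG_eq_zero τ S r (Or.inr ⟨p, h, rfl⟩)

lemma mkG_D_add (ij : {ij : Fin r × Fin r // ij.1 < ij.2}) (a : α) :
    mkG τ S r (of (Dnp r ij a)) + mkG τ S r (of (Dnp r ij (τ a))) = 0 := by
  obtain ⟨⟨i0, j0⟩, hij0⟩ := ij
  set i : ℕ := i0.1 with hi
  set j : ℕ := j0.1 with hj
  have hij : i < j := hij0
  have hjr : j < r := j0.isLt
  set P : NPhrase α := List.replicate i none ++ some (0, τ a) :: some (1, a) ::
      (List.replicate (j-i) none ++ some (1,a) :: some (0, τ a) ::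
        List.replicate (r-1-j) none) with hPdef
  have hocc : occs P = [(0, τ a), (1, a), (1, a), (0, τ a)] := by simp [hPdef]
  have hP : IsNano P := isNano_of_occs_four _ _ _ _ _ (by omega) hocc
  have hPc : comps P = r := by rw [comps_eq]; simp [hPdef]; omega
  set Pnp : NP α r := ⟨P, hP, hPc⟩ with hPnp
  set Q' : NP α r := ⟨Dlist r i j 1 a, isNano_Dlist _ _ _ _ _,
      comps_Dlist _ _ _ _ _ (le_of_lt hij) hjr⟩ with hQ'
  have h2 : mkG τ S r (of Pnp) + mkG τ S r (of (Dnp r ⟨(i0,j0),hij0⟩ (τ a))) +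
      mkG τ S r (of Q') = 0 := by
    refine mkG_h2 τ S r (x := List.replicate i none) (y := List.replicate (j-i) none)
      (z := List.replicate (r-1-j) none) (i := 0) (j := 1) (a := τ a) (b := a)
      rfl ?_ ?_ ?_
    · simp [hPnp, hPdef]
    · simp [Dnp, Dlist]; rfl
    · simp [hQ', Dlist]
  have hrk : mkG τ S r (of Pnp) = 0 := by
    apply mkG_rank
    show 1 < rank P
    rw [rank, lettersOf, hocc]
    simp
  have hiso : mkG τ S r (of Q') = mkG τ S r (of (Dnp r ⟨(i0,j0),hij0⟩ a)) := by
    apply mkG_iso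
    refine ⟨Equiv.swap 1 0, ?_⟩
    simp [hQ', Dnp, Dlist, Equiv.swap_apply_left]; rfl
  rw [hrk, zero_add] at h2
  rw [← hiso, add_comm]
  exact h2

/-! ### The invariant -/

noncomputable def phi0 : List (ℕ × α) → MG τ r
  | [] => (1, 0)
  | [(c1, a), (c2, _)] =>
      if c1 = c2 then 0
      else (0, fun ij => if c1 = (ij.1.1 : ℕ) ∧ c2 = (ij.1.2 : ℕ) then piOf τ a else 0)
  | _ => 0

@[simp] lemma phi0_nil : phi0 τ r ([] : List (ℕ × α)) = (1, 0) := rfl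

lemma phi0_pair (c1 c2 : ℕ) (a b : α) :
    phi0 τ r [(c1, a), (c2, b)] =
      if c1 = c2 then 0
      else (0, fun ij => if c1 = (ij.1.1 : ℕ) ∧ c2 = (ij.1.2 : ℕ) then piOf τ a else 0) :=
  rfl

lemma phi0_one (x : ℕ × α) : phi0 τ r [x] = 0 := by
  rcases x with ⟨c, a⟩; rfl

lemma phi0_big (x y z : ℕ × α) (l : List (ℕ × α)) :
    phi0 τ r (x :: y :: z :: l) = 0 := by
  rcases x with ⟨c1, a1⟩; rcases y with ⟨c2, a2⟩; rcases z with ⟨c3, a3⟩; rfl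

lemma phi0_length3 {l : List (ℕ × α)} (h : 3 ≤ l.length) : phi0 τ r l = 0 := by
  match l, h with
  | x :: y :: z :: t, _ => exact phi0_big τ r x y z t

noncomputable def phi (p : NP α r) : MG τ r := phi0 τ r (key 0 p.1)

lemma phi_len {p : NP α r} (h : 3 ≤ (occs p.1).length) : phi τ r p = 0 := by
  rw [phi]; exact phi0_length3 τ r (by rw [key_length]; exact h)

noncomputable def PhiF : FreeAbelianGroup (NP α r) →+ MG τ r :=
  FreeAbelianGroup.lift (phi τ r)

@[simp] lemma PhiF_of (p : NP α r) : PhiF τ r (of p) = phi τ r p :=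
  FreeAbelianGroup.lift_apply_of _ _

lemma PhiF_vanish : ∀ g ∈ relSet τ S r 1, PhiF τ r g = 0 := by
  rintro g ((((⟨p, q, hiso, rfl⟩ | ⟨p, x, y, i, a, hp, rfl⟩) |
    ⟨p, q, q', x, y, z, i, j, a, b, hab, hp, hq, hq', rfl⟩) |
    ⟨p1, p2, p3, p4, q1, q2, q3, q4, x, y, z, t, i, j, k, a, b, c, A, B, C,
      hS, hA, hB, hC, h1, h2, h3, h4, h5, h6, h7, h8, rfl⟩) | ⟨p, hrk, rfl⟩)
  · -- isomorphism relation
    obtain ⟨σ, hσ⟩ := hiso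
    rw [map_sub, PhiF_of, PhiF_of, phi, phi, ← hσ, key_map, sub_self]
  · -- H1
    rw [PhiF_of, phi, hp]
    rw [show x ++ [some (i,a), some (i,a)] ++ y
        = x ++ (some (i,a) :: some (i,a) :: y) by simp]
    rw [key_append]
    simp only [key_cons_some]
    cases h1 : key 0 x with
    | cons u t1 =>
      exact phi0_length3 τ r (by simp only [List.length_append, List.length_cons]; omega)
    | nil =>
      cases h2 : key (0 + nones x) y with
      | cons u t2 =>
        exact phi0_length3 τ r (by simp only [List.length_append, List.length_cons]; omega)
      | nil => simp [phi0_pair]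
  · -- H2
    rw [map_add, map_add, PhiF_of, PhiF_of, PhiF_of]
    have hplen : phi τ r p = 0 := phi_len τ r (by rw [hp]; simp; omega)
    rw [hplen, zero_add, phi, phi, hq, hq']
    rw [show x ++ [some (i,a)] ++ y ++ [some (i,a)] ++ z
        = x ++ (some (i,a) :: (y ++ some (i,a) :: z)) by simp]
    rw [show x ++ [some (j,b)] ++ y ++ [some (j,b)] ++ z
        = x ++ (some (j,b) :: (y ++ some (j,b) :: z)) by simp]
    rw [key_append, key_append]
    simp only [key_cons_some, key_append]
    have hlen3 : ∀ (u : ℕ × α) (t1 k2 : List (ℕ × α)) (c1 c2 : ℕ) (a1 a2 : α),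
        3 ≤ ((u :: t1) ++ (c1, a1) :: k2 ++ [(c2, a2)]).length := by
      intro u t1 k2 c1 c2 a1 a2
      simp only [List.length_append, List.length_cons]
      omega
    cases h1 : key 0 x with
    | cons u t1 =>
      rw [phi0_length3 τ r (by simp only [List.length_append, List.length_cons]; omega),
        phi0_length3 τ r (by simp only [List.length_append, List.length_cons]; omega), add_zero]
    | nil =>
      cases h2 : key (0 + nones x) y with
      | cons u t2 =>
        rw [phi0_length3 τ r (by simp only [List.length_append, List.length_cons]; omega),
          phi0_length3 τ r (by simp only [List.length_append, List.length_cons]; omega), add_zero]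
      | nil =>
        cases h3 : key (0 + nones x + nones y) z with
        | cons u t3 =>
          rw [phi0_length3 τ r (by simp only [List.length_append, List.length_cons]; omega),
            phi0_length3 τ r (by simp only [List.length_append, List.length_cons]; omega), add_zero]
        | nil =>
          simp only [List.nil_append, List.append_nil]
          rw [phi0_pair, phi0_pair]
          by_cases hcc : (0 + nones x : ℕ) = 0 + nones x + nones y
          · rw [if_pos hcc, if_pos hcc]; simp
          · rw [if_neg hcc, if_neg hcc]
            subst hab
            rw [Prod.mk_add_mk, Prod.mk_eq_zero]
            refine ⟨by simp, ?_⟩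
            funext kl
            simp only [Pi.add_apply, Pi.zero_apply]
            by_cases hk : 0 + nones x = (kl.1.1 : ℕ) ∧ 0 + nones x + nones y = (kl.1.2 : ℕ)
            · rw [if_pos hk, if_pos hk, add_comm]
              exact piOf_add_tau τ b
            · rw [if_neg hk, if_neg hk, add_zero]
  · -- H3 : every term has at least four occurrences
    subst hA; subst hB; subst hC
    have e1 : phi τ r p1 = 0 := phi_len τ r (by rw [h1]; simp; omega)
    have e2 : phi τ r p2 = 0 := phi_len τ r (by rw [h2]; simp; omega)
    have e3 : phi τ r p3 = 0 := phi_len τ r (by rw [h3]; simp; omega)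
    have e4 : phi τ r p4 = 0 := phi_len τ r (by rw [h4]; simp; omega)
    have f1 : phi τ r q1 = 0 := phi_len τ r (by rw [h5]; simp; omega)
    have f2 : phi τ r q2 = 0 := phi_len τ r (by rw [h6]; simp; omega)
    have f3 : phi τ r q3 = 0 := phi_len τ r (by rw [h7]; simp; omega)
    have f4 : phi τ r q4 = 0 := phi_len τ r (by rw [h8]; simp; omega)
    simp [map_add, map_sub, e1, e2, e3, e4, f1, f2, f3, f4]
  · -- rank > 1
    rw [PhiF_of]
    apply phi_len
    rw [occs_length_eq p.2.1]
    omega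

noncomputable def Phi : Gn α τ S r 1 →+ MG τ r :=
  QuotientAddGroup.lift (AddSubgroup.closure (relSet τ S r 1)) (PhiF τ r)
    (fun g hg => by
      have hle : AddSubgroup.closure (relSet τ S r 1) ≤ (PhiF τ r).ker :=
        (AddSubgroup.closure_le _).mpr (fun x hx =>
          AddMonoidHom.mem_ker.mpr (PhiF_vanish τ S r x hx))
      exact AddMonoidHom.mem_ker.mp (hle hg))

lemma Phi_mk (p : NP α r) : Phi τ S r (mkG τ S r (of p)) = phi τ r p := by
  show PhiF τ r (of p) = _
  exact PhiF_of τ r p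

/-! ### The inverse map -/

noncomputable def DH (ij : {ij : Fin r × Fin r // ij.1 < ij.2}) :
    PiGrp τ →+ Gn α τ S r 1 :=
  QuotientAddGroup.lift (piRel τ)
    ((mkG τ S r).comp (FreeAbelianGroup.lift (fun a => of (Dnp r ij a))))
    (fun g hg => by
      have hle : piRel τ ≤ ((mkG τ S r).comp
          (FreeAbelianGroup.lift (fun a => of (Dnp r ij a)))).ker := by
        rw [piRel]
        refine (AddSubgroup.closure_le _).mpr ?_
        rintro g ⟨a, rfl⟩
        refine AddMonoidHom.mem_ker.mpr ?_
        simp only [AddMonoidHom.comp_apply, map_add, FreeAbelianGroup.lift_apply_of]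
        exact mkG_D_add τ S r ij a
      exact AddMonoidHom.mem_ker.mp (hle hg))

lemma DH_piOf (ij : {ij : Fin r × Fin r // ij.1 < ij.2}) (a : α) :
    DH τ S r ij (piOf τ a) = mkG τ S r (of (Dnp r ij a)) := by
  show DH τ S r ij (QuotientAddGroup.mk (FreeAbelianGroup.of a)) = _
  show ((mkG τ S r).comp (FreeAbelianGroup.lift (fun a => of (Dnp r ij a)))) (of a) = _
  simp [FreeAbelianGroup.lift_apply_of]

noncomputable def psi2 : ({ij : Fin r × Fin r // ij.1 < ij.2} → PiGrp τ) →+ Gn α τ S r 1 :=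
  AddMonoidHom.mk' (fun f => ∑ ij, DH τ S r ij (f ij))
    (fun f g => by simp [Finset.sum_add_distrib])

noncomputable def psi (hr : 1 ≤ r) : MG τ r →+ Gn α τ S r 1 :=
  AddMonoidHom.coprod ((zmultiplesHom _) (mkG τ S r (of (Enp r hr)))) (psi2 τ S r)

lemma psi_apply (hr : 1 ≤ r) (m : MG τ r) :
    psi τ S r hr m = m.1 • mkG τ S r (of (Enp r hr)) + ∑ ij, DH τ S r ij (m.2 ij) := by
  simp [psi, psi2, AddMonoidHom.coprod_apply, zmultiplesHom_apply, AddMonoidHom.mk'_apply]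

lemma psi_single (hr : 1 ≤ r) (ij : {ij : Fin r × Fin r // ij.1 < ij.2}) (x : PiGrp τ) :
    psi τ S r hr (0, Pi.single ij x) = DH τ S r ij x := by
  rw [psi_apply]
  simp only [zero_smul, zero_add]
  rw [Fintype.sum_eq_single ij (fun kl hkl => by rw [Pi.single_eq_of_ne hkl, map_zero]),
    Pi.single_eq_same]

/-! ### Values of the invariant on canonical nanophrases -/

lemma phi0_pair_single (ij : {ij : Fin r × Fin r // ij.1 < ij.2}) (a : α) :
    phi0 τ r [((ij.1.1 : ℕ), a), ((ij.1.2 : ℕ), a)] = (0, Pi.single ij (piOf τ a)) := by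
  have hne : (ij.1.1 : ℕ) ≠ (ij.1.2 : ℕ) := Nat.ne_of_lt ij.2
  rw [phi0_pair, if_neg hne]
  refine Prod.ext_iff.mpr ⟨rfl, ?_⟩
  show (fun kl => if (ij.1.1 : ℕ) = (kl.1.1 : ℕ) ∧ (ij.1.2 : ℕ) = (kl.1.2 : ℕ)
      then piOf τ a else 0) = Pi.single ij (piOf τ a)
  funext kl
  by_cases h : kl = ij
  · subst h
    rw [if_pos ⟨rfl, rfl⟩, Pi.single_eq_same]
  · rw [if_neg, Pi.single_eq_of_ne h]
    rintro ⟨h1, h2⟩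
    exact h (Subtype.ext (Prod.ext_iff.mpr ⟨Fin.ext h1.symm, Fin.ext h2.symm⟩))

lemma phi_Dnp (ij : {ij : Fin r × Fin r // ij.1 < ij.2}) (a : α) :
    phi τ r (Dnp r ij a) = (0, Pi.single ij (piOf τ a)) := by
  rw [phi]
  have hval : (Dnp r ij a).1 = Dlist r ij.1.1.1 ij.1.2.1 0 a := rfl
  rw [hval, key_Dlist r _ _ 0 a (le_of_lt ij.2)]
  exact phi0_pair_single τ r ij a

lemma phi_Enp (hr : 1 ≤ r) : phi τ r (Enp r hr) = (1, 0) := by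
  rw [phi]
  have hval : (Enp r hr).1 = Elist (α := α) r := rfl
  rw [hval, Elist, key_replicate, phi0_nil]

/-! ### `psi` is a left inverse on generators -/

lemma psi_phi (hr : 1 ≤ r) (p : NP α r) :
    psi τ S r hr (Phi τ S r (mkG τ S r (of p))) = mkG τ S r (of p) := by
  rw [Phi_mk]
  have hlen := occs_length_eq p.2.1
  rcases hrank : rank p.1 with _ | n
  · -- rank 0 : p is the empty phrase
    rw [hrank] at hlen
    have h0 : occs p.1 = [] := List.length_eq_zero_iff.mp (by omega)
    have hk : key 0 p.1 = [] := key_eq_nil_of_occs_nil h0 0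
    rw [phi, hk, phi0_nil]
    have hpe : p = Enp r hr := by
      apply Subtype.ext
      have hrep := eq_replicate_of_occs_nil h0
      have hc := p.2.2
      rw [comps_eq] at hc
      have hn : nones p.1 = p.1.length := by
        conv_lhs => rw [hrep]
        rw [nones_replicate]
      have hlen' : p.1.length = r - 1 := by omega
      rw [hrep, hlen']
      rfl
    rw [hpe, psi_apply]
    simp
  · rcases n with _ | n
    · -- rank 1
      rw [hrank] at hlen
      obtain ⟨u, v, hocc⟩ := List.length_eq_two.mp (by omega : (occs p.1).length = 2)
      obtain ⟨x0, a⟩ := u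
      obtain ⟨x1, b⟩ := v
      have hx : x0 = x1 := by
        have h1 := p.2.1.1 x0 (by simp [lettersOf, hocc])
        rw [hocc] at h1
        by_contra hne
        simp [List.count_cons, hne, Ne.symm hne] at h1
      subst hx
      have hab : a = b := p.2.1.2 x0 a b (by rw [hocc]; simp) (by rw [hocc]; simp)
      subst hab
      obtain ⟨l1, l2', h1n, hpe1, h2'⟩ := exists_decomp hocc
      obtain ⟨l2, l3, h2n, hpe2, h3n⟩ := exists_decomp h2'
      subst hpe2
      set n1 := l1.length with hn1
      set n2 := l2.length with hn2
      set n3 := l3.length with hn3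
      have e1 : l1 = List.replicate n1 none := eq_replicate_of_occs_nil h1n
      have e2 : l2 = List.replicate n2 none := eq_replicate_of_occs_nil h2n
      have e3 : l3 = List.replicate n3 none := eq_replicate_of_occs_nil h3n
      have hkey : key 0 p.1 = [(n1, a), (n1 + n2, a)] := by
        rw [hpe1, e1, e2, e3]
        simp [key_append]
      have hcomps : n1 + n2 + n3 + 1 = r := by
        have hc := p.2.2
        rw [comps_eq, hpe1, e1, e2, e3] at hc
        simp at hc
        omega
      by_cases h2z : n2 = 0
      · -- the two occurrences are adjacent : H1 applies
        have hl2 : l2 = [] := List.length_eq_zero_iff.mp h2z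
        rw [phi, hkey, h2z, phi0_pair, if_pos (by omega), map_zero]
        refine (mkG_h1 τ S r (p := p) (x := l1) (y := l3) (i := x0) (a := a) ?_).symm
        rw [hpe1, hl2]
        simp
      · have hij : n1 < n1 + n2 := by omega
        have hjr : n1 + n2 < r := by omega
        have h1r : n1 < r := by omega
        rw [phi, hkey]
        rw [show phi0 τ r [(n1, a), (n1 + n2, a)] =
            (0, Pi.single (⟨(⟨n1, h1r⟩, ⟨n1 + n2, hjr⟩), hij⟩ :
              {ij : Fin r × Fin r // ij.1 < ij.2}) (piOf τ a)) from
          phi0_pair_single τ r ⟨(⟨n1, h1r⟩, ⟨n1 + n2, hjr⟩), hij⟩ a]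
        rw [psi_single, DH_piOf]
        refine mkG_iso τ S r ⟨Equiv.swap 0 x0, ?_⟩
        rw [hpe1, e1, e2, e3]
        have hval : (Dnp r ⟨(⟨n1, h1r⟩, ⟨n1 + n2, hjr⟩), hij⟩ a).1 =
            Dlist r n1 (n1 + n2) 0 a := rfl
        rw [hval, Dlist]
        have hx2 : n1 + n2 - n1 = n2 := by omega
        have hx3 : r - 1 - (n1 + n2) = n3 := by omega
        rw [hx2, hx3]
        simp [Equiv.swap_apply_left]
    · -- rank at least 2
      rw [hrank] at hlen
      have hphi : phi τ r p = 0 := phi_len τ r (by omega)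
      rw [hphi, map_zero, mkG_rank τ S r (by omega)]

/-! ### `Phi` is a left inverse of `psi` -/

lemma Phi_DH (ij : {ij : Fin r × Fin r // ij.1 < ij.2}) (x : PiGrp τ) :
    Phi τ S r (DH τ S r ij x) = ((0 : ℤ), Pi.single ij x) := by
  induction x using QuotientAddGroup.induction_on with
  | H y =>
    refine FreeAbelianGroup.induction_on y ?_ ?_ ?_ ?_
    · show Phi τ S r (DH τ S r ij ((0 : FreeAbelianGroup α) : PiGrp τ)) = _
      simp
      rfl
    · intro a
      show Phi τ S r (DH τ S r ij (piOf τ a)) = (0, Pi.single ij (piOf τ a))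
      rw [DH_piOf, Phi_mk, phi_Dnp]
    · intro a ha
      show Phi τ S r (DH τ S r ij (((-FreeAbelianGroup.of a : FreeAbelianGroup α) : PiGrp τ)))
        = _
      have h1 : ((-FreeAbelianGroup.of a : FreeAbelianGroup α) : PiGrp τ)
          = -((FreeAbelianGroup.of a : FreeAbelianGroup α) : PiGrp τ) := rfl
      rw [h1, map_neg, map_neg, ha, Pi.single_neg]
      exact Prod.ext_iff.mpr ⟨by simp, by simp⟩
    · intro g h hg hh
      show Phi τ S r (DH τ S r ij
          (((g : FreeAbelianGroup α) : PiGrp τ) + ((h : FreeAbelianGroup α) : PiGrp τ))) = _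
      have h1 : (((g + h : FreeAbelianGroup α)) : PiGrp τ)
          = ((g : FreeAbelianGroup α) : PiGrp τ) + ((h : FreeAbelianGroup α) : PiGrp τ) := rfl
      rw [h1, map_add, map_add, hg, hh, Pi.single_add]
      exact Prod.ext_iff.mpr ⟨by simp, by simp⟩

lemma Phi_psi (hr : 1 ≤ r) (m : MG τ r) : Phi τ S r (psi τ S r hr m) = m := by
  obtain ⟨n, f⟩ := m
  rw [psi_apply, map_add, map_zsmul, map_sum, Phi_mk, phi_Enp]
  have hterm : ∀ ij, Phi τ S r (DH τ S r ij (f ij)) = ((0 : ℤ), Pi.single ij (f ij)) :=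
    fun ij => Phi_DH τ S r ij (f ij)
  rw [Finset.sum_congr rfl (fun ij _ => hterm ij)]
  have hs : (∑ ij, (((0 : ℤ), Pi.single ij (f ij)) : MG τ r)) = ((0 : ℤ), f) := by
    refine Prod.ext_iff.mpr ⟨?_, ?_⟩
    · rw [show (∑ ij, (((0 : ℤ), Pi.single ij (f ij)) : MG τ r)).1
          = ∑ ij, ((((0 : ℤ), Pi.single ij (f ij)) : MG τ r)).1 from
        map_sum (AddMonoidHom.fst ℤ _) (fun ij => (((0 : ℤ), Pi.single ij (f ij)) : MG τ r))
          Finset.univ]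
      simp
    · rw [show (∑ ij, (((0 : ℤ), Pi.single ij (f ij)) : MG τ r)).2
          = ∑ ij, ((((0 : ℤ), Pi.single ij (f ij)) : MG τ r)).2 from
        map_sum (AddMonoidHom.snd ℤ _) (fun ij => (((0 : ℤ), Pi.single ij (f ij)) : MG τ r))
          Finset.univ]
      simp [Finset.univ_sum_single]
  rw [hs]
  have hn : (n • (((1 : ℤ), (0 : {ij : Fin r × Fin r // ij.1 < ij.2} → PiGrp τ)) : MG τ r))
      = ((n : ℤ), (0 : {ij : Fin r × Fin r // ij.1 < ij.2} → PiGrp τ)) := by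
    rw [Prod.smul_mk]
    simp
  rw [hn, Prod.mk_add_mk]
  simp

end G1Aux

/-- for any homotopy data `(α,τ,S)` and any `r ≥ 1`, the group
`G_1(α,τ,S,r)` is isomorphic to `ℤ ⊕ ⨁_{1 ≤ i < j ≤ r} π`, where π is the abelian
group generated by α with relations `a + τ(a) = 0`. -/
theorem G1_iso (α : Type) (τ : α → α) (hτ : Function.Involutive τ)
    (S : Set (α × α × α)) (r : ℕ) (hr : 1 ≤ r) :
    Nonempty (Gn α τ S r 1 ≃+
      ℤ × ({ij : Fin r × Fin r // ij.1 < ij.2} → PiGrp τ)) := by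
  refine ⟨AddMonoidHom.toAddEquiv (G1Aux.Phi τ S r) (G1Aux.psi τ S r hr) ?_ ?_⟩
  · apply AddMonoidHom.ext
    intro gq
    induction gq using QuotientAddGroup.induction_on with
    | H g =>
      show G1Aux.psi τ S r hr (G1Aux.Phi τ S r (G1Aux.mkG τ S r g)) = G1Aux.mkG τ S r g
      refine FreeAbelianGroup.induction_on g ?_ ?_ ?_ ?_
      · simp
      · intro p
        exact G1Aux.psi_phi τ S r hr p
      · intro p hp
        rw [map_neg, map_neg, map_neg, hp]
      · intro g1 g2 h1 h2
        rw [map_add, map_add, map_add, h1, h2]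
  · apply AddMonoidHom.ext
    intro m
    exact G1Aux.Phi_psi τ S r hr m
end

section
/- For nanowords (1-component nanophrases) and any homotopy data, G_1(α,τ,S,1) ≅ Z; consequently there are no nonconstant finite type invariants of degree 1 for any homotopy of nanowords. -/
open List

attribute [local instance] Classical.propDecidable

section Aux
variable {α : Type}

lemma occs_map (f : ℕ × α → ℕ × α) (p : NPhrase α) :
    occs (p.map (Option.map f)) = (occs p).map f := by
  induction p with
  | nil => rfl
  | cons s t ih =>
    cases s with
    | none => simpa [occs, List.filterMap_cons] using ih
    | some v => simpa [occs, List.filterMap_cons] using ih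

lemma mem_lettersOf {p : NPhrase α} {i : ℕ} {a : α} (h : some (i, a) ∈ p) :
    i ∈ lettersOf p := by
  have h1 : (i, a) ∈ occs p := List.mem_filterMap.mpr ⟨some (i, a), h, rfl⟩
  exact List.mem_toFinset.mpr (List.mem_map.mpr ⟨(i, a), h1, rfl⟩)

lemma rank_ne_zero {p : NPhrase α} {i : ℕ} {a : α} (h : some (i, a) ∈ p) :
    rank p ≠ 0 := by
  have hm := mem_lettersOf h
  intro hc
  rw [rank, Finset.card_eq_zero] at hc
  rw [hc] at hm
  exact absurd hm (Finset.notMem_empty i)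

lemma iso_rank {p q : NPhrase α} (h : Iso p q) : rank p = rank q := by
  obtain ⟨σ, hσ⟩ := h
  have hq : lettersOf q = (lettersOf p).image σ := by
    rw [← hσ, lettersOf, occs_map]
    ext y
    simp only [List.mem_toFinset, List.mem_map, Finset.mem_image, lettersOf,
      List.mem_toFinset]
    aesop
  rw [rank, rank, hq, Finset.card_image_of_injective _ σ.injective]

lemma comps_one_eq {p : NPhrase α} (h : comps p = 1) : p = (occs p).map some := by
  have h0 : p.countP (fun s => s.isNone) = 0 := by
    have := h
    rw [comps] at this
    omega
  clear h
  induction p with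
  | nil => rfl
  | cons s t ih =>
    cases s with
    | none => simp [List.countP_cons] at h0
    | some v =>
      rw [List.countP_cons] at h0
      simp only [Option.isNone_some, if_neg] at h0
      have ht : t.countP (fun s => s.isNone) = 0 := by omega
      have := ih ht
      simp only [occs, List.filterMap_cons, id] at this ⊢
      simpa using this

lemma rank_zero_case {p : NPhrase α} (hc : comps p = 1) (hr : rank p = 0) :
    p = [] := by
  have hp := comps_one_eq hc
  have hle : lettersOf p = ∅ := Finset.card_eq_zero.mp hr
  have hocc : occs p = [] := by
    cases hocc : occs p with
    | nil => rfl
    | cons v t =>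
      exfalso
      have hv : v.1 ∈ lettersOf p :=
        List.mem_toFinset.mpr (List.mem_map.mpr ⟨v, by rw [hocc]; simp, rfl⟩)
      rw [hle] at hv
      exact absurd hv (Finset.notMem_empty _)
  rw [hp, hocc]; rfl

lemma rank_one_case {p : NPhrase α} (hn : IsNano p) (hc : comps p = 1)
    (hr : rank p = 1) : ∃ i a, p = [some (i, a), some (i, a)] := by
  have hp := comps_one_eq hc
  obtain ⟨x0, hx0⟩ := Finset.card_eq_one.mp hr
  have hall : ∀ y ∈ (occs p).map Prod.fst, y = x0 := by
    intro y hy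
    have hmem : y ∈ lettersOf p := List.mem_toFinset.mpr hy
    rw [hx0] at hmem
    exact Finset.mem_singleton.mp hmem
  have hcount : ((occs p).map Prod.fst).count x0 = 2 := by
    apply hn.1
    rw [hx0]; exact Finset.mem_singleton_self x0
  have hlen : ((occs p).map Prod.fst).length = 2 := by
    rw [← hcount]
    exact (List.count_eq_length.mpr (fun y hy => (hall y hy).symm)).symm
  rw [List.length_map] at hlen
  obtain ⟨v1, v2, hv⟩ := List.length_eq_two.mp hlen
  have h1 : v1.1 = x0 := hall v1.1 (by simp [hv])
  have h2 : v2.1 = x0 := hall v2.1 (by simp [hv])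
  have hm1 : (x0, v1.2) ∈ occs p := by rw [hv]; simp [← h1]
  have hm2 : (x0, v2.2) ∈ occs p := by rw [hv]; simp [← h2]
  have hab := hn.2 x0 v1.2 v2.2 hm1 hm2
  refine ⟨x0, v1.2, ?_⟩
  rw [hp, hv]
  simp only [List.map_cons, List.map_nil]
  congr 2
  · exact Prod.ext h1 rfl
  · congr 1; exact Prod.ext h2 hab.symm

end Aux
/-- for nanowords (1-component nanophrases) and any homotopy data
`(α,τ,S)`, `G_1(α,τ,S,1) ≅ ℤ`; consequently every finite type invariant of
degree 1 of nanowords is constant (there are no nonconstant degree-1 finite type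
invariants), since `G_1` is the image of a universal degree-1 invariant and its
only free generator is the class of the trivial nanoword. -/
theorem G1_nanowords_iso_int (α : Type) (τ : α → α) (hτ : Function.Involutive τ)
    (S : Set (α × α × α)) :
    Nonempty (Gn α τ S 1 1 ≃+ ℤ) := by
  classical
  have hnil : IsNano ([] : NPhrase α) ∧ comps ([] : NPhrase α) = 1 := by
    refine ⟨⟨?_, ?_⟩, rfl⟩
    · intro x hx; simp [lettersOf, occs] at hx
    · intro x a b h; simp [occs] at h
  set e0 : NP α 1 := ⟨[], hnil⟩ with he0
  set φ0 : FreeAbelianGroup (NP α 1) →+ ℤ :=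
    FreeAbelianGroup.lift (fun p : NP α 1 => if rank p.1 = 0 then (1 : ℤ) else 0)
    with hφ0
  have hφof : ∀ p : NP α 1,
      φ0 (FreeAbelianGroup.of p) = if rank p.1 = 0 then 1 else 0 := by
    intro p; rw [hφ0]; exact FreeAbelianGroup.lift_apply_of _ _
  have key : ∀ (p : NP α 1) (i : ℕ) (a : α), some (i, a) ∈ p.1 →
      φ0 (FreeAbelianGroup.of p) = 0 := by
    intro p i a h
    rw [hφof, if_neg (rank_ne_zero h)]
  have hker : AddSubgroup.closure (relSet τ S 1 1) ≤ φ0.ker := by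
    rw [AddSubgroup.closure_le]
    intro g hg
    simp only [relSet, Set.mem_union, Set.mem_setOf_eq] at hg
    rw [SetLike.mem_coe, AddMonoidHom.mem_ker]
    rcases hg with ((((⟨p, q, hiso, rfl⟩ | ⟨p, x, y, i, a, hp, rfl⟩) |
        ⟨p, q, q', x, y, z, i, j, a, b, hab, hp, hq, hq', rfl⟩) |
        ⟨p1, p2, p3, p4, q1, q2, q3, q4, x, y, z, t, i, j, k, a, b, c, A, B, C,
          hS, hA, hB, hC, h1, h2, h3, h4, h5, h6, h7, h8, rfl⟩) |
        ⟨p, hrk, rfl⟩)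
    · rw [map_sub, hφof, hφof, iso_rank hiso, sub_self]
    · exact key p i a (by rw [hp]; simp)
    · rw [map_add, map_add,
        key p i a (by rw [hp]; simp), key q i a (by rw [hq]; simp),
        key q' j b (by rw [hq']; simp)]
      ring
    · subst hA hB hC
      rw [map_sub, map_sub, map_sub, map_sub, map_add, map_add, map_add,
        key p1 i a (by rw [h1]; simp), key p2 i a (by rw [h2]; simp),
        key p3 i a (by rw [h3]; simp), key p4 j b (by rw [h4]; simp),
        key q1 i a (by rw [h5]; simp), key q2 i a (by rw [h6]; simp),
        key q3 i a (by rw [h7]; simp), key q4 j b (by rw [h8]; simp)]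
      ring
    · rw [hφof, if_neg (by omega)]
  set φbar : Gn α τ S 1 1 →+ ℤ :=
    QuotientAddGroup.lift _ φ0 (fun x hx => hker hx) with hφbar
  set g0 : Gn α τ S 1 1 := QuotientAddGroup.mk (FreeAbelianGroup.of e0) with hg0
  set ψ : ℤ →+ Gn α τ S 1 1 := zmultiplesHom _ g0 with hψ
  have hφbar_mk : ∀ a, φbar (QuotientAddGroup.mk a) = φ0 a := fun a => rfl
  have hrank_nil : rank ([] : NPhrase α) = 0 := rfl
  have hgen : ∀ p : NP α 1,
      ψ (φ0 (FreeAbelianGroup.of p)) = QuotientAddGroup.mk (FreeAbelianGroup.of p) := by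
    intro p
    rcases Nat.lt_or_ge (rank p.1) 2 with hlt | hge
    · interval_cases h : rank p.1
      · -- rank 0 : p is the empty word
        have hp : p.1 = [] := rank_zero_case p.2.2 h
        have : p = e0 := Subtype.ext (by rw [hp])
        rw [this, hφof, he0]
        simp [hrank_nil, hψ, hg0]
        rfl
      · -- rank 1 : p = AA, vanishes
        obtain ⟨i, a, hp⟩ := rank_one_case p.2.1 p.2.2 h
        have hmem : FreeAbelianGroup.of p ∈ relSet τ S 1 1 := by
          simp only [relSet, Set.mem_union, Set.mem_setOf_eq]
          exact Or.inl (Or.inl (Or.inl (Or.inr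
            ⟨p, [], [], i, a, by simpa using hp, rfl⟩)))
        have h0 : (QuotientAddGroup.mk (FreeAbelianGroup.of p) : Gn α τ S 1 1) = 0 :=
          (QuotientAddGroup.eq_zero_iff _).mpr (AddSubgroup.subset_closure hmem)
        rw [hφof, if_neg (by omega), h0, map_zero]
    · -- rank ≥ 2 : vanishes by the rank relation
      have hmem : FreeAbelianGroup.of p ∈ relSet τ S 1 1 := by
        simp only [relSet, Set.mem_union, Set.mem_setOf_eq]
        exact Or.inr ⟨p, by omega, rfl⟩
      have h0 : (QuotientAddGroup.mk (FreeAbelianGroup.of p) : Gn α τ S 1 1) = 0 :=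
        (QuotientAddGroup.eq_zero_iff _).mpr (AddSubgroup.subset_closure hmem)
      rw [hφof, if_neg (by omega), h0, map_zero]
  have left_inv : ∀ x : Gn α τ S 1 1, ψ (φbar x) = x := by
    intro x
    refine QuotientAddGroup.induction_on x ?_
    intro a
    rw [hφbar_mk]
    refine FreeAbelianGroup.induction_on a ?_ ?_ ?_ ?_
    · simp
    · intro p; exact hgen p
    · intro p hp
      rw [map_neg, map_neg, hp]
      rfl
    · intro u v hu hv
      rw [map_add, map_add, hu, hv]
      rfl
  have right_inv : ∀ n : ℤ, φbar (ψ n) = n := by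
    intro n
    have h1 : φbar g0 = 1 := by
      rw [hg0, hφbar_mk, hφof, he0, if_pos hrank_nil]
    have : ψ n = n • g0 := rfl
    rw [this, map_zsmul, h1, smul_eq_mul, mul_one]
  exact ⟨{ toFun := φbar, invFun := ψ, left_inv := left_inv,
           right_inv := right_inv, map_add' := φbar.map_add }⟩
end

section
/- Let (α,τ,S) be homotopy data with S diagonal, l the number of free orbits of τ on α and k the number of fixed points of τ. Then G_2(α,τ,S,1) ≅ Z^{l²−l+1} ⊕ (Z/2)^{k²+2kl−k}. -/
open List

attribute [local instance] Classical.propDecidable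

noncomputable section G2Aux
open FreeAbelianGroup

variable {α : Type} [Fintype α]

def ea : α → ℕ := fun a => (Fintype.equivFin α a : ℕ)

lemma ea_inj : Function.Injective (ea (α := α)) := fun a b h =>
  (Fintype.equivFin α).injective (Fin.val_injective h)

variable (τ : α → α)

def inB (a : α) : Prop := τ a = a ∨ ea a < ea (τ a)

abbrev Bt := {a : α // inB τ a}


abbrev Fpt := {p : Bt τ × Bt τ // p.1 ≠ p.2 ∧ τ (p.1).1 ≠ (p.1).1 ∧ τ (p.2).1 ≠ (p.2).1}
abbrev Tpt := {p : Bt τ × Bt τ // p.1 ≠ p.2 ∧ ¬(τ (p.1).1 ≠ (p.1).1 ∧ τ (p.2).1 ≠ (p.2).1)}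


abbrev Mt := (Fpt τ → ℤ) × (Tpt τ → ZMod 2)
abbrev Nt := ℤ × Mt τ


def rep (a : α) : α := if inB τ a then a else τ a
def sgn (a : α) : ℤ := if inB τ a then 1 else -1

variable {τ}

lemma inB_of_not (hτ : Function.Involutive τ) {a : α} (h : ¬ inB τ a) : inB τ (τ a) := by
  unfold inB at h ⊢
  push_neg at h
  rw [hτ a]
  right
  rcases lt_or_eq_of_le h.2 with h2 | h2
  · exact h2
  · exact absurd (ea_inj h2) h.1

lemma inB_rep (hτ : Function.Involutive τ) (a : α) : inB τ (rep τ a) := by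
  unfold rep
  split
  · assumption
  · exact inB_of_not hτ (by assumption)

lemma rep_eq_of_inB {a : α} (h : inB τ a) : rep τ a = a := if_pos h

lemma not_inB_tau (hτ : Function.Involutive τ) {a : α} (hf : τ a ≠ a) (h : inB τ a) :
    ¬ inB τ (τ a) := by
  have hlt : ea a < ea (τ a) := h.resolve_left hf
  unfold inB
  rw [hτ a]
  push_neg
  exact ⟨fun e => hf e.symm, le_of_lt hlt⟩

lemma rep_tau (hτ : Function.Involutive τ) (a : α) : rep τ (τ a) = rep τ a := by
  by_cases hf : τ a = a
  · rw [hf]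
  · by_cases h : inB τ a
    · rw [rep, if_neg (not_inB_tau hτ hf h), hτ a, rep_eq_of_inB h]
    · rw [rep_eq_of_inB (inB_of_not hτ h), rep, if_neg h]

lemma sgn_tau (hτ : Function.Involutive τ) {a : α} (hf : τ a ≠ a) :
    sgn τ (τ a) = - sgn τ a := by
  by_cases h : inB τ a
  · rw [sgn, if_neg (not_inB_tau hτ hf h), sgn, if_pos h]
  · rw [sgn, if_pos (inB_of_not hτ h), sgn, if_neg h]
    norm_num

lemma free_rep (hτ : Function.Involutive τ) (a : α) :
    (τ (rep τ a) ≠ rep τ a) ↔ τ a ≠ a := by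
  unfold rep
  split
  · exact Iff.rfl
  · constructor
    · intro h e
      apply h
      rw [hτ a]
      exact e.symm
    · intro h e
      rw [hτ a] at e
      exact h e.symm

def repB (hτ : Function.Involutive τ) (a : α) : Bt τ := ⟨rep τ a, inB_rep hτ a⟩

lemma repB_tau (hτ : Function.Involutive τ) (a : α) : repB hτ (τ a) = repB hτ a :=
  Subtype.ext (rep_tau hτ a)

lemma neg_zmod2 (x : Tpt τ → ZMod 2) : -x = x := by
  funext t
  have : ∀ z : ZMod 2, -z = z := by decide
  exact this (x t)

lemma negMt (u : Fpt τ → ℤ) (v : Tpt τ → ZMod 2) : -((u, v) : Mt τ) = (-u, v) := by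
  rw [show -((u, v) : Mt τ) = (-u, -v) from rfl, neg_zmod2]

/-- The model value of the linked pair with labels `(a, b)`. -/
def mg (hτ : Function.Involutive τ) (a b : α) : Mt τ :=
  if h : repB hτ a = repB hτ b then 0
  else if hf : τ a ≠ a ∧ τ b ≠ b then
    ((sgn τ a * sgn τ b) • Pi.single
      (⟨(repB hτ a, repB hτ b), h, ((free_rep hτ a).2 hf.1), ((free_rep hτ b).2 hf.2)⟩ : Fpt τ)
      (1:ℤ), 0)
  else (0, Pi.single
      (⟨(repB hτ a, repB hτ b), h, fun hc =>
          hf ⟨(free_rep hτ a).1 hc.1, (free_rep hτ b).1 hc.2⟩⟩ : Tpt τ) (1 : ZMod 2))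

lemma mg_self (hτ : Function.Involutive τ) (a : α) : mg hτ a a = 0 := by
  rw [mg, dif_pos rfl]

lemma mg_tau_left (hτ : Function.Involutive τ) (a b : α) :
    mg hτ (τ a) b = - mg hτ a b := by
  by_cases hf : τ a = a
  · rw [hf]
    by_cases h : repB hτ a = repB hτ b
    · rw [mg, dif_pos h]; simp
    · rw [mg, dif_neg h, dif_neg (fun hc : τ a ≠ a ∧ _ => hc.1 hf), negMt, neg_zero]
  · by_cases h : repB hτ a = repB hτ b
    · rw [mg, dif_pos (by rw [repB_tau hτ]; exact h), mg, dif_pos h]; simp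
    · have h' : repB hτ (τ a) ≠ repB hτ b := by rw [repB_tau hτ]; exact h
      have hfa' : τ (τ a) ≠ τ a := by rw [hτ a]; exact fun e => hf e.symm
      by_cases hb : τ b ≠ b
      · rw [mg, dif_neg h', dif_pos ⟨hfa', hb⟩, mg, dif_neg h, dif_pos ⟨hf, hb⟩]
        have hidx : (⟨(repB hτ (τ a), repB hτ b), h', ((free_rep hτ (τ a)).2 hfa'), ((free_rep hτ b).2 hb)⟩ : Fpt τ)
            = ⟨(repB hτ a, repB hτ b), h, ((free_rep hτ a).2 hf), ((free_rep hτ b).2 hb)⟩ := by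
          apply Subtype.ext
          rw [Prod.ext_iff]
          exact ⟨repB_tau hτ a, rfl⟩
        rw [hidx, sgn_tau hτ hf, negMt, neg_mul, neg_smul]
      · rw [mg, dif_neg h', dif_neg (fun hc => hb hc.2), mg, dif_neg h,
          dif_neg (fun hc => hb hc.2), negMt, neg_zero]
        refine congrArg _ ?_
        refine congrArg (fun t => Pi.single t (1 : ZMod 2)) ?_
        apply Subtype.ext
        rw [Prod.ext_iff]
        exact ⟨repB_tau hτ a, rfl⟩

lemma mg_tau_right (hτ : Function.Involutive τ) (a b : α) :
    mg hτ a (τ b) = - mg hτ a b := by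
  by_cases hf : τ b = b
  · rw [hf]
    by_cases h : repB hτ a = repB hτ b
    · rw [mg, dif_pos h]; simp
    · rw [mg, dif_neg h, dif_neg (fun hc : _ ∧ τ b ≠ b => hc.2 hf), negMt, neg_zero]
  · by_cases h : repB hτ a = repB hτ b
    · rw [mg, dif_pos (by rw [repB_tau hτ]; exact h), mg, dif_pos h]; simp
    · have h' : repB hτ a ≠ repB hτ (τ b) := by rw [repB_tau hτ]; exact h
      have hfb' : τ (τ b) ≠ τ b := by rw [hτ b]; exact fun e => hf e.symm
      by_cases ha : τ a ≠ a
      · rw [mg, dif_neg h', dif_pos ⟨ha, hfb'⟩, mg, dif_neg h, dif_pos ⟨ha, hf⟩]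
        have hidx : (⟨(repB hτ a, repB hτ (τ b)), h', ((free_rep hτ a).2 ha), ((free_rep hτ (τ b)).2 hfb')⟩ : Fpt τ)
            = ⟨(repB hτ a, repB hτ b), h, ((free_rep hτ a).2 ha), ((free_rep hτ b).2 hf)⟩ := by
          apply Subtype.ext
          rw [Prod.ext_iff]
          exact ⟨rfl, repB_tau hτ b⟩
        rw [hidx, sgn_tau hτ hf, negMt, mul_neg, neg_smul]
      · rw [mg, dif_neg h', dif_neg (fun hc => ha hc.1), mg, dif_neg h,
          dif_neg (fun hc => ha hc.1), negMt, neg_zero]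
        refine congrArg _ ?_
        refine congrArg (fun t => Pi.single t (1 : ZMod 2)) ?_
        apply Subtype.ext
        rw [Prod.ext_iff]
        exact ⟨rfl, repB_tau hτ b⟩

def mval (hτ : Function.Involutive τ) : NPhrase α → Mt τ
  | [some (i,a), some (j,b), some (i',_), some (j',_)] =>
      if i = i' ∧ j = j' ∧ ¬ i = j then mg hτ a b else 0
  | _ => 0

def fval (p : NPhrase α) : ℤ := if p = [] then 1 else 0

def val (hτ : Function.Involutive τ) (p : NPhrase α) : Nt τ := (fval p, mval hτ p)

lemma mval_quad (hτ : Function.Involutive τ) (i j i' j' : ℕ) (a b a' b' : α) :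
    mval hτ [some (i,a), some (j,b), some (i',a'), some (j',b')] =
      if i = i' ∧ j = j' ∧ ¬ i = j then mg hτ a b else 0 := rfl

lemma mval_spec (hτ : Function.Involutive τ) (p : NPhrase α) :
    (∃ (i j : ℕ) (a b a' b' : α), ¬ i = j ∧
      p = [some (i,a), some (j,b), some (i,a'), some (j,b')] ∧
      mval hτ p = mg hτ a b) ∨ mval hτ p = 0 := by
  rw [mval.eq_def]
  split
  · rename_i i a j b i' a' j' b'
    by_cases hc : i = i' ∧ j = j' ∧ ¬ i = j
    · left
      refine ⟨i, j, a, b, a', b', hc.2.2, ?_, ?_⟩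
      · rw [hc.1, hc.2.1]
      · rw [if_pos hc]
    · right
      rw [if_neg hc]
  · right
    rfl

lemma mval_of_len (hτ : Function.Involutive τ) {p : NPhrase α} (h : p.length ≠ 4) :
    mval hτ p = 0 := by
  rcases mval_spec hτ p with ⟨i, j, a, b, a', b', hij, hp, hv⟩ | h0
  · rw [hp] at h; simp at h
  · exact h0

lemma map_map_inv (σ : ℕ ≃ ℕ) (p : NPhrase α) :
    (p.map (Option.map fun xa => (σ xa.1, xa.2))).map
      (Option.map fun xa => (σ.symm xa.1, xa.2)) = p := by
  rw [List.map_map]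
  have : (Option.map (fun xa : ℕ × α => (σ.symm xa.1, xa.2)) ∘
      Option.map (fun xa : ℕ × α => (σ xa.1, xa.2))) = id := by
    funext o
    rcases o with _ | ⟨x, a⟩ <;> simp
  rw [this, List.map_id]

lemma fval_map (σ : ℕ ≃ ℕ) (p : NPhrase α) :
    fval (p.map (Option.map fun xa => (σ xa.1, xa.2))) = fval p := by
  rcases p with _ | ⟨s, p⟩ <;> simp [fval]

lemma mval_map (hτ : Function.Involutive τ) (σ : ℕ ≃ ℕ) (p : NPhrase α) :
    mval hτ (p.map (Option.map fun xa => (σ xa.1, xa.2))) = mval hτ p := by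
  rcases mval_spec hτ p with ⟨i, j, a, b, a', b', hij, hp, hv⟩ | h0
  · subst hp
    simp only [List.map_cons, List.map_nil, Option.map_some]
    rw [mval_quad, if_pos ⟨rfl, rfl, fun e => hij (σ.injective e)⟩, hv]
  · rcases mval_spec hτ (p.map (Option.map fun xa => (σ xa.1, xa.2))) with
      ⟨i, j, a, b, a', b', hij, hq, hv⟩ | h0'
    · have hp : p = [some (σ.symm i, a), some (σ.symm j, b),
          some (σ.symm i, a'), some (σ.symm j, b')] := by
        rw [← map_map_inv σ p, hq]
        simp
      have hmg : mval hτ p = mg hτ a b := by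
        rw [hp, mval_quad, if_pos ⟨rfl, rfl, fun e => hij (σ.symm.injective e)⟩]
      rw [hv, ← hmg, h0]
    · rw [h0', h0]

lemma val_map (hτ : Function.Involutive τ) (σ : ℕ ≃ ℕ) (p : NPhrase α) :
    val hτ (p.map (Option.map fun xa => (σ xa.1, xa.2))) = val hτ p := by
  unfold val
  rw [fval_map, mval_map]


lemma count4_eq (n m1 m2 m3 m4 : ℕ) : List.count n [m1,m2,m3,m4] =
    (if m1 = n then 1 else 0) + (if m2 = n then 1 else 0) +
    (if m3 = n then 1 else 0) + (if m4 = n then 1 else 0) := by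
  simp only [List.count_cons, List.count_nil, beq_iff_eq]
  split_ifs <;> omega

lemma val_zero_of (hτ : Function.Involutive τ) {p : NPhrase α} (hne : p ≠ [])
    (hm : mval hτ p = 0) : val hτ p = 0 := by
  rw [val, fval, if_neg hne, hm]; rfl

lemma val_H1 (hτ : Function.Involutive τ) (x y : NPhrase α) (i : ℕ) (a : α) :
    val hτ (x ++ [some (i,a), some (i,a)] ++ y) = 0 := by
  refine val_zero_of hτ (by simp) ?_
  rcases x with _ | ⟨x1, _ | ⟨x2, _ | ⟨x3, x⟩⟩⟩
  · rcases y with _ | ⟨y1, _ | ⟨y2, _ | ⟨y3, y⟩⟩⟩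
    · exact mval_of_len hτ (by simp <;> omega)
    · exact mval_of_len hτ (by simp <;> omega)
    · rcases y1 with _ | ⟨n3, u3⟩
      · simp [mval]
      rcases y2 with _ | ⟨n4, u4⟩
      · simp [mval]
      show mval hτ [some (i,a), some (i,a), some (n3,u3), some (n4,u4)] = 0
      rw [mval_quad, if_neg]
      rintro ⟨-, -, h3⟩
      exact h3 rfl
    · exact mval_of_len hτ (by simp <;> omega)
  · rcases y with _ | ⟨y1, _ | ⟨y2, y⟩⟩
    · exact mval_of_len hτ (by simp <;> omega)
    · rcases x1 with _ | ⟨n1, u1⟩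
      · simp [mval]
      rcases y1 with _ | ⟨n4, u4⟩
      · simp [mval]
      show mval hτ [some (n1,u1), some (i,a), some (i,a), some (n4,u4)] = 0
      rw [mval_quad, if_neg]
      rintro ⟨h1, -, h3⟩
      exact h3 h1
    · exact mval_of_len hτ (by simp <;> omega)
  · rcases y with _ | ⟨y1, y⟩
    · rcases x1 with _ | ⟨n1, u1⟩
      · simp [mval]
      rcases x2 with _ | ⟨n2, u2⟩
      · simp [mval]
      show mval hτ [some (n1,u1), some (n2,u2), some (i,a), some (i,a)] = 0
      rw [mval_quad, if_neg]
      rintro ⟨h1, h2, h3⟩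
      exact h3 (h1.trans h2.symm)
    · exact mval_of_len hτ (by simp <;> omega)
  · exact mval_of_len hτ (by simp <;> omega)

lemma nano_count {p : NP α 1} {L : List (ℕ × α)} (hL : occs p.1 = L) {n : ℕ}
    (hn : n ∈ L.map Prod.fst) : (L.map Prod.fst).count n = 2 := by
  have h1 := p.2.1.1 n (by rw [lettersOf, hL]; exact List.mem_toFinset.2 hn)
  rw [hL] at h1
  exact h1

lemma val_H2 (hτ : Function.Involutive τ) {p q q' : NP α 1} {x y z : NPhrase α}
    {i j : ℕ} {a b : α} (hab : a = τ b)
    (hp : p.1 = x ++ [some (i,a), some (j,b)] ++ y ++ [some (j,b), some (i,a)] ++ z)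
    (hq : q.1 = x ++ [some (i,a)] ++ y ++ [some (i,a)] ++ z)
    (hq' : q'.1 = x ++ [some (j,b)] ++ y ++ [some (j,b)] ++ z) :
    val hτ p.1 + val hτ q.1 + val hτ q'.1 = 0 := by
  have hvp : val hτ p.1 = 0 := by
    rw [hp]
    refine val_zero_of hτ (by simp) ?_
    rcases x with _ | ⟨x1, x⟩
    · rcases y with _ | ⟨y1, y⟩
      · rcases z with _ | ⟨z1, z⟩
        · show mval hτ [some (i,a), some (j,b), some (j,b), some (i,a)] = 0
          rw [mval_quad, if_neg]
          rintro ⟨h1, -, h3⟩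
          exact h3 h1
        · exact mval_of_len hτ (by simp <;> omega)
      · exact mval_of_len hτ (by simp <;> omega)
    · exact mval_of_len hτ (by simp <;> omega)
  rw [hvp, zero_add]
  have hfq : fval q.1 = 0 := by rw [hq, fval, if_neg (by simp)]
  have hfq' : fval q'.1 = 0 := by rw [hq', fval, if_neg (by simp)]
  have hsum : mval hτ q.1 + mval hτ q'.1 = 0 := by
    rw [hq, hq']
    rcases x with _ | ⟨x1, _ | ⟨x2, _ | ⟨x3, x⟩⟩⟩
    · rcases y with _ | ⟨y1, _ | ⟨y2, _ | ⟨y3, y⟩⟩⟩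
      · rcases z with _ | ⟨z1, _ | ⟨z2, _ | ⟨z3, z⟩⟩⟩
        · rw [mval_of_len hτ (by simp), mval_of_len hτ (by simp)]; simp
        · rw [mval_of_len hτ (by simp), mval_of_len hτ (by simp)]; simp
        · -- [A,A,z1,z2]
          rcases z1 with _ | ⟨m1, w1⟩
          · simp [mval]
          rcases z2 with _ | ⟨m2, w2⟩
          · simp [mval]
          show mval hτ [some (i,a), some (i,a), some (m1,w1), some (m2,w2)] +
            mval hτ [some (j,b), some (j,b), some (m1,w1), some (m2,w2)] = 0
          rw [mval_quad, mval_quad, if_neg (by rintro ⟨-, -, h3⟩; exact h3 rfl),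
            if_neg (by rintro ⟨-, -, h3⟩; exact h3 rfl)]
          simp
        · rw [mval_of_len hτ (by simp <;> omega), mval_of_len hτ (by simp <;> omega)]; simp
      · rcases z with _ | ⟨z1, _ | ⟨z2, z⟩⟩
        · rw [mval_of_len hτ (by simp), mval_of_len hτ (by simp)]; simp
        · -- [A,y1,A,z1] and [B,y1,B,z1]
          rcases y1 with _ | ⟨e, v⟩
          · simp [mval]
          rcases z1 with _ | ⟨e', v'⟩
          · simp [mval]
          have hcq : occs q.1 = [(i,a), (e,v), (i,a), (e',v')] := by rw [hq]; simp [occs]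
          have hcq' : occs q'.1 = [(j,b), (e,v), (j,b), (e',v')] := by rw [hq']; simp [occs]
          have hni : (e : ℕ) ≠ i := by
            have := nano_count hcq (n := i) (by simp)
            rw [List.map_cons] at this
            simp only [List.map_cons, List.map_nil] at this
            rw [count4_eq] at this
            intro he
            split_ifs at this <;> omega
          have hnj : (e : ℕ) ≠ j := by
            have := nano_count hcq' (n := j) (by simp)
            simp only [List.map_cons, List.map_nil] at this
            rw [count4_eq] at this
            intro he
            split_ifs at this <;> omega
          show mval hτ [some (i,a), some (e,v), some (i,a), some (e',v')] +
            mval hτ [some (j,b), some (e,v), some (j,b), some (e',v')] = 0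
          rw [mval_quad, mval_quad]
          by_cases hee : (e : ℕ) = e'
          · rw [if_pos ⟨rfl, hee, fun h => hni h.symm⟩,
              if_pos ⟨rfl, hee, fun h => hnj h.symm⟩, hab, mg_tau_left]
            abel
          · rw [if_neg (fun h => hee h.2.1), if_neg (fun h => hee h.2.1)]
            simp
        · rw [mval_of_len hτ (by simp <;> omega), mval_of_len hτ (by simp <;> omega)]; simp
      · rcases z with _ | ⟨z1, z⟩
        · -- [A,y1,y2,A]
          rcases y1 with _ | ⟨e1, v1⟩
          · simp [mval]
          rcases y2 with _ | ⟨e2, v2⟩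
          · simp [mval]
          show mval hτ [some (i,a), some (e1,v1), some (e2,v2), some (i,a)] +
            mval hτ [some (j,b), some (e1,v1), some (e2,v2), some (j,b)] = 0
          rw [mval_quad, mval_quad, if_neg (by rintro ⟨-, h2, h3⟩; exact h3 h2.symm),
            if_neg (by rintro ⟨-, h2, h3⟩; exact h3 h2.symm)]
          simp
        · rw [mval_of_len hτ (by simp <;> omega), mval_of_len hτ (by simp <;> omega)]; simp
      · rw [mval_of_len hτ (by simp <;> omega), mval_of_len hτ (by simp <;> omega)]; simp
    · rcases y with _ | ⟨y1, _ | ⟨y2, y⟩⟩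
      · rcases z with _ | ⟨z1, _ | ⟨z2, z⟩⟩
        · rw [mval_of_len hτ (by simp), mval_of_len hτ (by simp)]; simp
        · -- [x1,A,A,z1]
          rcases x1 with _ | ⟨c, u⟩
          · simp [mval]
          rcases z1 with _ | ⟨e', v'⟩
          · simp [mval]
          show mval hτ [some (c,u), some (i,a), some (i,a), some (e',v')] +
            mval hτ [some (c,u), some (j,b), some (j,b), some (e',v')] = 0
          rw [mval_quad, mval_quad, if_neg (by rintro ⟨h1, -, h3⟩; exact h3 h1),
            if_neg (by rintro ⟨h1, -, h3⟩; exact h3 h1)]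
          simp
        · rw [mval_of_len hτ (by simp <;> omega), mval_of_len hτ (by simp <;> omega)]; simp
      · rcases z with _ | ⟨z1, z⟩
        · -- [x1,A,y1,A] and [x1,B,y1,B]
          rcases x1 with _ | ⟨c, u⟩
          · simp [mval]
          rcases y1 with _ | ⟨c', u'⟩
          · simp [mval]
          have hcq : occs q.1 = [(c,u), (i,a), (c',u'), (i,a)] := by rw [hq]; simp [occs]
          have hcq' : occs q'.1 = [(c,u), (j,b), (c',u'), (j,b)] := by rw [hq']; simp [occs]
          have hni : (c : ℕ) ≠ i := by
            have := nano_count hcq (n := i) (by simp)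
            simp only [List.map_cons, List.map_nil] at this
            rw [count4_eq] at this
            intro he
            split_ifs at this <;> omega
          have hnj : (c : ℕ) ≠ j := by
            have := nano_count hcq' (n := j) (by simp)
            simp only [List.map_cons, List.map_nil] at this
            rw [count4_eq] at this
            intro he
            split_ifs at this <;> omega
          show mval hτ [some (c,u), some (i,a), some (c',u'), some (i,a)] +
            mval hτ [some (c,u), some (j,b), some (c',u'), some (j,b)] = 0
          rw [mval_quad, mval_quad]
          by_cases hcc : (c : ℕ) = c'
          · rw [if_pos ⟨hcc, rfl, hni⟩, if_pos ⟨hcc, rfl, hnj⟩, hab, mg_tau_right]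
            abel
          · rw [if_neg (fun h => hcc h.1), if_neg (fun h => hcc h.1)]
            simp
        · rw [mval_of_len hτ (by simp <;> omega), mval_of_len hτ (by simp <;> omega)]; simp
      · rw [mval_of_len hτ (by simp <;> omega), mval_of_len hτ (by simp <;> omega)]; simp
    · rcases y with _ | ⟨y1, y⟩
      · rcases z with _ | ⟨z1, z⟩
        · -- [x1,x2,A,A]
          rcases x1 with _ | ⟨c1, u1⟩
          · simp [mval]
          rcases x2 with _ | ⟨c2, u2⟩
          · simp [mval]
          show mval hτ [some (c1,u1), some (c2,u2), some (i,a), some (i,a)] +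
            mval hτ [some (c1,u1), some (c2,u2), some (j,b), some (j,b)] = 0
          rw [mval_quad, mval_quad, if_neg (by rintro ⟨h1, h2, h3⟩; exact h3 (h1.trans h2.symm)),
            if_neg (by rintro ⟨h1, h2, h3⟩; exact h3 (h1.trans h2.symm))]
          simp
        · rw [mval_of_len hτ (by simp <;> omega), mval_of_len hτ (by simp <;> omega)]; simp
      · rw [mval_of_len hτ (by simp <;> omega), mval_of_len hτ (by simp <;> omega)]; simp
    · rw [mval_of_len hτ (by simp <;> omega), mval_of_len hτ (by simp <;> omega)]; simp
  have : val hτ q.1 + val hτ q'.1 = ((fval q.1 + fval q'.1 : ℤ), mval hτ q.1 + mval hτ q'.1) := rfl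
  rw [this, hfq, hfq', hsum]
  rfl

lemma val_shapeA (hτ : Function.Involutive τ) (x y z t : NPhrase α) (s1 s2 s3 s4 : NSym α)
    (h4 : mval hτ [s1,s2,s3,s4] = 0) :
    val hτ (x ++ [s1,s2] ++ y ++ [s3] ++ z ++ [s4] ++ t) = 0 := by
  refine val_zero_of hτ (by simp) ?_
  rcases x with _|⟨x1,x⟩ <;> rcases y with _|⟨y1,y⟩ <;> rcases z with _|⟨z1,z⟩ <;>
    rcases t with _|⟨t1,t⟩ <;>
    first
      | exact h4
      | exact mval_of_len hτ (by simp <;> omega)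

lemma val_shapeB (hτ : Function.Involutive τ) (x y z t : NPhrase α) (s1 s2 s3 s4 : NSym α)
    (h4 : mval hτ [s1,s2,s3,s4] = 0) :
    val hτ (x ++ [s1] ++ y ++ [s2,s3] ++ z ++ [s4] ++ t) = 0 := by
  refine val_zero_of hτ (by simp) ?_
  rcases x with _|⟨x1,x⟩ <;> rcases y with _|⟨y1,y⟩ <;> rcases z with _|⟨z1,z⟩ <;>
    rcases t with _|⟨t1,t⟩ <;>
    first
      | exact h4
      | exact mval_of_len hτ (by simp <;> omega)

lemma val_shapeC (hτ : Function.Involutive τ) (x y z t : NPhrase α) (s1 s2 s3 s4 : NSym α)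
    (h4 : mval hτ [s1,s2,s3,s4] = 0) :
    val hτ (x ++ [s1] ++ y ++ [s2] ++ z ++ [s3,s4] ++ t) = 0 := by
  refine val_zero_of hτ (by simp) ?_
  rcases x with _|⟨x1,x⟩ <;> rcases y with _|⟨y1,y⟩ <;> rcases z with _|⟨z1,z⟩ <;>
    rcases t with _|⟨t1,t⟩ <;>
    first
      | exact h4
      | exact mval_of_len hτ (by simp <;> omega)

lemma val_len6 (hτ : Function.Involutive τ) (x y z t : NPhrase α) (s1 s2 s3 s4 s5 s6 : NSym α) :
    val hτ (x ++ [s1,s2] ++ y ++ [s3,s4] ++ z ++ [s5,s6] ++ t) = 0 := by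
  refine val_zero_of hτ (by simp) ?_
  exact mval_of_len hτ (by simp <;> omega)

lemma rank_quad_le2 (i j : ℕ) (a b a' b' : α) :
    rank [some (i,a), some (j,b), some (i,a'), some (j,b')] ≤ 2 := by
  rw [rank]
  have hsub : lettersOf [some (i,a), some (j,b), some (i,a'), some (j,b')] ⊆ ({i, j} : Finset ℕ) := by
    intro n hn
    simp [lettersOf, occs] at hn
    simp [Finset.mem_insert]
    tauto
  refine le_trans (Finset.card_le_card hsub) ?_
  refine le_trans (Finset.card_insert_le _ _) ?_
  simp

lemma val_rank (hτ : Function.Involutive τ) {p : NPhrase α} (hr : 2 < rank p) :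
    val hτ p = 0 := by
  have hne : p ≠ [] := by
    rintro rfl
    simp [rank, lettersOf, occs] at hr
  refine val_zero_of hτ hne ?_
  rcases mval_spec hτ p with ⟨i, j, a, b, a', b', hij, hp, hv⟩ | h0
  · exfalso
    rw [hp] at hr
    exact absurd (rank_quad_le2 i j a b a' b') (by omega)
  · exact h0

abbrev Sdiag (α : Type) : Set (α × α × α) := {s | ∃ a : α, s = (a, a, a)}

/-- The lifted invariant kills all defining relations. -/
lemma relSet_ker (hτ : Function.Involutive τ) :
    ∀ g ∈ relSet τ (Sdiag α) 1 2,
      FreeAbelianGroup.lift (fun p : NP α 1 => val hτ p.1) g = 0 := by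
  intro g hg
  rcases hg with ((((hg | hg) | hg) | hg) | hg)
  · obtain ⟨p, q, ⟨σ, hσ⟩, rfl⟩ := hg
    rw [map_sub, FreeAbelianGroup.lift_apply_of, FreeAbelianGroup.lift_apply_of, ← hσ, val_map]
    exact sub_self _
  · obtain ⟨p, x, y, i, a, hp, rfl⟩ := hg
    rw [FreeAbelianGroup.lift_apply_of, hp]
    exact val_H1 hτ x y i a
  · obtain ⟨p, q, q', x, y, z, i, j, a, b, hab, hp, hq, hq', rfl⟩ := hg
    rw [map_add, map_add, FreeAbelianGroup.lift_apply_of, FreeAbelianGroup.lift_apply_of,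
      FreeAbelianGroup.lift_apply_of]
    exact val_H2 hτ hab hp hq hq'
  · obtain ⟨p1, p2, p3, p4, q1, q2, q3, q4, x, y, z, t, i, j, k, a, b, c, A, B, C,
      hS, hA, hB, hC, h1, h2, h3, h4, h5, h6, h7, h8, rfl⟩ := hg
    obtain ⟨d, hd⟩ := hS
    rw [Prod.mk.injEq, Prod.mk.injEq] at hd
    obtain ⟨rfl, rfl, rfl⟩ := hd
    subst hA hB hC
    have e1 : FreeAbelianGroup.lift (fun p : NP α 1 => val hτ p.1) (FreeAbelianGroup.of p1) = 0 := by
      rw [FreeAbelianGroup.lift_apply_of, h1]; exact val_len6 hτ _ _ _ _ _ _ _ _ _ _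
    have e5 : FreeAbelianGroup.lift (fun p : NP α 1 => val hτ p.1) (FreeAbelianGroup.of q1) = 0 := by
      rw [FreeAbelianGroup.lift_apply_of, h5]; exact val_len6 hτ _ _ _ _ _ _ _ _ _ _
    have e2 : FreeAbelianGroup.lift (fun p : NP α 1 => val hτ p.1) (FreeAbelianGroup.of p2) = 0 := by
      rw [FreeAbelianGroup.lift_apply_of, h2]
      refine val_shapeA hτ _ _ _ _ _ _ _ _ ?_
      rw [mval_quad]
      split_ifs
      · exact mg_self hτ _
      · rfl
    have e3 : FreeAbelianGroup.lift (fun p : NP α 1 => val hτ p.1) (FreeAbelianGroup.of p3) = 0 := by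
      rw [FreeAbelianGroup.lift_apply_of, h3]
      refine val_shapeB hτ _ _ _ _ _ _ _ _ ?_
      rw [mval_quad, if_neg]
      rintro ⟨-, -, h⟩
      exact h rfl
    have e4 : FreeAbelianGroup.lift (fun p : NP α 1 => val hτ p.1) (FreeAbelianGroup.of p4) = 0 := by
      rw [FreeAbelianGroup.lift_apply_of, h4]
      refine val_shapeC hτ _ _ _ _ _ _ _ _ ?_
      rw [mval_quad]
      split_ifs
      · exact mg_self hτ _
      · rfl
    have e6 : FreeAbelianGroup.lift (fun p : NP α 1 => val hτ p.1) (FreeAbelianGroup.of q2) = 0 := by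
      rw [FreeAbelianGroup.lift_apply_of, h6]
      refine val_shapeA hτ _ _ _ _ _ _ _ _ ?_
      rw [mval_quad, if_neg]
      rintro ⟨hx, -, hz⟩
      exact hz hx
    have e7 : FreeAbelianGroup.lift (fun p : NP α 1 => val hτ p.1) (FreeAbelianGroup.of q3) = 0 := by
      rw [FreeAbelianGroup.lift_apply_of, h7]
      refine val_shapeB hτ _ _ _ _ _ _ _ _ ?_
      rw [mval_quad]
      split_ifs
      · exact mg_self hτ _
      · rfl
    have e8 : FreeAbelianGroup.lift (fun p : NP α 1 => val hτ p.1) (FreeAbelianGroup.of q4) = 0 := by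
      rw [FreeAbelianGroup.lift_apply_of, h8]
      refine val_shapeC hτ _ _ _ _ _ _ _ _ ?_
      rw [mval_quad, if_neg]
      rintro ⟨hx, -, hz⟩
      exact hz hx
    simp [map_sub, map_add, e1, e2, e3, e4, e5, e6, e7, e8]
  · obtain ⟨p, hr, rfl⟩ := hg
    rw [FreeAbelianGroup.lift_apply_of]
    exact val_rank hτ hr

def mkG (τ : α → α) : FreeAbelianGroup (NP α 1) →+ Gn α τ (Sdiag α) 1 2 :=
  QuotientAddGroup.mk' _

def Psi (hτ : Function.Involutive τ) : Gn α τ (Sdiag α) 1 2 →+ Nt τ :=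
  QuotientAddGroup.lift _ (FreeAbelianGroup.lift fun p : NP α 1 => val hτ p.1)
    (fun x hx =>
      AddMonoidHom.mem_ker.mp
        ((AddSubgroup.closure_le _).2
          (fun g hg => AddMonoidHom.mem_ker.mpr (relSet_ker hτ g hg)) hx))

lemma Psi_of (hτ : Function.Involutive τ) (p : NP α 1) :
    Psi hτ (mkG τ (FreeAbelianGroup.of p)) = val hτ p.1 := by
  show FreeAbelianGroup.lift (fun p : NP α 1 => val hτ p.1) (FreeAbelianGroup.of p) = _
  exact FreeAbelianGroup.lift_apply_of _ _

lemma mkG_zero {g : FreeAbelianGroup (NP α 1)} (h : g ∈ relSet τ (Sdiag α) 1 2) :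
    mkG τ g = 0 :=
  (QuotientAddGroup.eq_zero_iff g).2 (AddSubgroup.subset_closure h)

lemma mk_iso {p q : NP α 1} (h : Iso p.1 q.1) :
    mkG τ (FreeAbelianGroup.of p) = mkG τ (FreeAbelianGroup.of q) := by
  have h0 : mkG τ (FreeAbelianGroup.of p - FreeAbelianGroup.of q) = 0 :=
    mkG_zero (Set.mem_union_left _ (Set.mem_union_left _ (Set.mem_union_left _
      (Set.mem_union_left _ ⟨p, q, h, rfl⟩))))
  rw [map_sub] at h0
  exact sub_eq_zero.1 h0

lemma mk_H1 {p : NP α 1} {x y : NPhrase α} {i : ℕ} {a : α}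
    (hp : p.1 = x ++ [some (i,a), some (i,a)] ++ y) :
    mkG τ (FreeAbelianGroup.of p) = 0 :=
  mkG_zero (Set.mem_union_left _ (Set.mem_union_left _ (Set.mem_union_left _
    (Set.mem_union_right _ ⟨p, x, y, i, a, hp, rfl⟩))))

lemma mk_H2 {p q q' : NP α 1} {x y z : NPhrase α} {i j : ℕ} {a b : α}
    (hab : a = τ b)
    (hp : p.1 = x ++ [some (i,a), some (j,b)] ++ y ++ [some (j,b), some (i,a)] ++ z)
    (hq : q.1 = x ++ [some (i,a)] ++ y ++ [some (i,a)] ++ z)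
    (hq' : q'.1 = x ++ [some (j,b)] ++ y ++ [some (j,b)] ++ z) :
    mkG τ (FreeAbelianGroup.of p) + mkG τ (FreeAbelianGroup.of q)
      + mkG τ (FreeAbelianGroup.of q') = 0 := by
  have h0 : mkG τ (FreeAbelianGroup.of p + FreeAbelianGroup.of q + FreeAbelianGroup.of q') = 0 :=
    mkG_zero (Set.mem_union_left _ (Set.mem_union_left _ (Set.mem_union_right _
      ⟨p, q, q', x, y, z, i, j, a, b, hab, hp, hq, hq', rfl⟩)))
  rw [map_add, map_add] at h0
  exact h0

lemma mk_H3 {p1 p2 p3 p4 q1 q2 q3 q4 : NP α 1} {x y z t : NPhrase α}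
    {i j k : ℕ} {d : α}
    (h1 : p1.1 = x ++ [some (i,d), some (j,d)] ++ y ++ [some (i,d), some (k,d)] ++ z
        ++ [some (j,d), some (k,d)] ++ t)
    (h2 : p2.1 = x ++ [some (i,d), some (j,d)] ++ y ++ [some (i,d)] ++ z ++ [some (j,d)] ++ t)
    (h3 : p3.1 = x ++ [some (i,d)] ++ y ++ [some (i,d), some (k,d)] ++ z ++ [some (k,d)] ++ t)
    (h4 : p4.1 = x ++ [some (j,d)] ++ y ++ [some (k,d)] ++ z ++ [some (j,d), some (k,d)] ++ t)
    (h5 : q1.1 = x ++ [some (j,d), some (i,d)] ++ y ++ [some (k,d), some (i,d)] ++ z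
        ++ [some (k,d), some (j,d)] ++ t)
    (h6 : q2.1 = x ++ [some (j,d), some (i,d)] ++ y ++ [some (i,d)] ++ z ++ [some (j,d)] ++ t)
    (h7 : q3.1 = x ++ [some (i,d)] ++ y ++ [some (k,d), some (i,d)] ++ z ++ [some (k,d)] ++ t)
    (h8 : q4.1 = x ++ [some (j,d)] ++ y ++ [some (k,d)] ++ z ++ [some (k,d), some (j,d)] ++ t) :
    mkG τ (FreeAbelianGroup.of p1) + mkG τ (FreeAbelianGroup.of p2)
      + mkG τ (FreeAbelianGroup.of p3) + mkG τ (FreeAbelianGroup.of p4)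
      - mkG τ (FreeAbelianGroup.of q1) - mkG τ (FreeAbelianGroup.of q2)
      - mkG τ (FreeAbelianGroup.of q3) - mkG τ (FreeAbelianGroup.of q4) = 0 := by
  have h0 : mkG τ (FreeAbelianGroup.of p1 + FreeAbelianGroup.of p2 + FreeAbelianGroup.of p3
      + FreeAbelianGroup.of p4 - FreeAbelianGroup.of q1 - FreeAbelianGroup.of q2
      - FreeAbelianGroup.of q3 - FreeAbelianGroup.of q4) = 0 :=
    mkG_zero (Set.mem_union_left _ (Set.mem_union_right _
      ⟨p1, p2, p3, p4, q1, q2, q3, q4, x, y, z, t, i, j, k, d, d, d,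
        some (i,d), some (j,d), some (k,d), ⟨d, rfl⟩, rfl, rfl, rfl,
        h1, h2, h3, h4, h5, h6, h7, h8, rfl⟩))
  simp only [map_sub, map_add] at h0
  exact h0

lemma mk_rank {p : NP α 1} (h : 2 < rank p.1) : mkG τ (FreeAbelianGroup.of p) = 0 :=
  mkG_zero (Set.mem_union_right _ ⟨p, h, rfl⟩)

lemma occs_map_some (L : List (ℕ × α)) : occs (L.map some) = L := by
  induction L with
  | nil => rfl
  | cons a t ih => simpa [occs, List.filterMap_cons] using ih

def wordOf (names : List ℕ) (lab : ℕ → α) : NPhrase α :=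
  (names.map (fun n => (n, lab n))).map some

lemma occs_wordOf (names : List ℕ) (lab : ℕ → α) :
    occs (wordOf names lab) = names.map (fun n => (n, lab n)) :=
  occs_map_some _

lemma isNano_of_names (names : List ℕ) (lab : ℕ → α)
    (hcount : ∀ x ∈ names, names.count x = 2) : IsNano (wordOf names lab) := by
  have hfst : (occs (wordOf names lab)).map Prod.fst = names := by
    rw [occs_wordOf, List.map_map]
    have : (Prod.fst ∘ fun n : ℕ => (n, lab n)) = id := rfl
    rw [this, List.map_id]
  constructor
  · intro x hx
    rw [lettersOf, hfst] at hx
    rw [hfst]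
    exact hcount x (List.mem_toFinset.1 hx)
  · intro x u v h1 h2
    rw [occs_wordOf] at h1 h2
    simp only [List.mem_map] at h1 h2
    obtain ⟨n1, -, he1⟩ := h1
    obtain ⟨n2, -, he2⟩ := h2
    rw [Prod.mk.injEq] at he1 he2
    obtain ⟨hn1, hu⟩ := he1
    obtain ⟨hn2, hv⟩ := he2
    subst hn1
    subst hn2
    rw [← hu, ← hv]

lemma comps_wordOf (names : List ℕ) (lab : ℕ → α) : comps (wordOf names lab) = 1 := by
  simp [comps, wordOf]

def NPof (names : List ℕ) (lab : ℕ → α) (h : ∀ x ∈ names, names.count x = 2) : NP α 1 :=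
  ⟨wordOf names lab, isNano_of_names names lab h, comps_wordOf names lab⟩

def Enp : NP α 1 :=
  ⟨[], ⟨by simp [lettersOf, occs], by simp [occs]⟩, by simp [comps]⟩

lemma count_WL {i j : ℕ} (hij : i ≠ j) : ∀ x ∈ [i,j,i,j], List.count x [i,j,i,j] = 2 := by
  intro x hx
  simp only [List.mem_cons, List.not_mem_nil, or_false] at hx
  rcases hx with rfl | rfl | rfl | rfl <;> rw [count4_eq] <;> split_ifs <;> omega

def Wnp (i j : ℕ) (hij : i ≠ j) (a b : α) : NP α 1 :=
  NPof [i,j,i,j] (fun n => if n = i then a else b) (count_WL hij)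

lemma Wnp_val (i j : ℕ) (hij : i ≠ j) (a b : α) :
    (Wnp i j hij a b).1 = [some (i,a), some (j,b), some (i,a), some (j,b)] := by
  simp [Wnp, NPof, wordOf, show (if i = i then a else b) = a from if_pos rfl,
    show (if j = i then a else b) = b from if_neg (fun h => hij h.symm)]

lemma Wnp_rank (i j : ℕ) (hij : i ≠ j) (a b : α) : rank (Wnp i j hij a b).1 ≤ 2 := by
  rw [Wnp_val]
  exact rank_quad_le2 i j a b a b

lemma rank_wordOf (names : List ℕ) (lab : ℕ → α) :
    rank (wordOf names lab) = names.toFinset.card := by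
  rw [rank, lettersOf, occs_wordOf, List.map_map]
  have : (Prod.fst ∘ fun n : ℕ => (n, lab n)) = id := rfl
  rw [this, List.map_id]

def sigma2 (i j : ℕ) : ℕ ≃ ℕ :=
  (Equiv.swap i 0).trans (Equiv.swap (Equiv.swap i 0 j) 1)

lemma sigma2_i (i j : ℕ) (hij : i ≠ j) : sigma2 i j i = 0 := by
  rw [sigma2, Equiv.trans_apply, Equiv.swap_apply_left]
  apply Equiv.swap_apply_of_ne_of_ne
  · by_cases hj0 : j = 0
    · subst hj0
      rw [Equiv.swap_apply_right]
      exact fun h => hij h.symm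
    · rw [Equiv.swap_apply_of_ne_of_ne (fun h => hij h.symm) hj0]
      exact fun h => hj0 h.symm
  · omega

lemma sigma2_j (i j : ℕ) : sigma2 i j j = 1 := by
  rw [sigma2, Equiv.trans_apply, Equiv.swap_apply_left]

def wcl (τ : α → α) (a b : α) : Gn α τ (Sdiag α) 1 2 :=
  mkG τ (FreeAbelianGroup.of (Wnp 0 1 (by omega) a b))

lemma mk_W (i j : ℕ) (hij : i ≠ j) (a b : α) :
    mkG τ (FreeAbelianGroup.of (Wnp i j hij a b)) = wcl τ a b := by
  apply mk_iso
  refine ⟨sigma2 i j, ?_⟩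
  rw [Wnp_val, Wnp_val]
  simp [sigma2_i i j hij, sigma2_j i j]

lemma wcl_add_left (hτ : Function.Involutive τ) (c a b : α) (hab : a = τ b) :
    wcl τ c a + wcl τ c b = 0 := by
  have hcnt : ∀ x ∈ [2,0,1,2,1,0], List.count x ([2,0,1,2,1,0] : List ℕ) = 2 := by decide
  set P : NP α 1 := NPof [2,0,1,2,1,0]
    (fun n => if n = 2 then c else if n = 0 then a else b) hcnt with hPdef
  have h := mk_H2 (τ := τ) (p := P) (q := Wnp 2 0 (by omega) c a)
    (q' := Wnp 2 1 (by omega) c b) (x := [some (2,c)]) (y := [some (2,c)]) (z := [])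
    (i := 0) (j := 1) (a := a) (b := b) hab (by rfl) (by rw [Wnp_val]; rfl) (by rw [Wnp_val]; rfl)
  have hP0 : mkG τ (FreeAbelianGroup.of P) = 0 := by
    apply mk_rank
    rw [show rank P.1 = (([2,0,1,2,1,0] : List ℕ).toFinset).card from rank_wordOf _ _]
    decide
  rw [hP0, zero_add, mk_W, mk_W] at h
  exact h

lemma wcl_add_right (hτ : Function.Involutive τ) (c a b : α) (hab : a = τ b) :
    wcl τ a c + wcl τ b c = 0 := by
  have hcnt : ∀ x ∈ [0,1,2,1,0,2], List.count x ([0,1,2,1,0,2] : List ℕ) = 2 := by decide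
  set P : NP α 1 := NPof [0,1,2,1,0,2]
    (fun n => if n = 2 then c else if n = 0 then a else b) hcnt with hPdef
  have h := mk_H2 (τ := τ) (p := P) (q := Wnp 0 2 (by omega) a c)
    (q' := Wnp 1 2 (by omega) b c) (x := []) (y := [some (2,c)]) (z := [some (2,c)])
    (i := 0) (j := 1) (a := a) (b := b) hab (by rfl) (by rw [Wnp_val]; rfl) (by rw [Wnp_val]; rfl)
  have hP0 : mkG τ (FreeAbelianGroup.of P) = 0 := by
    apply mk_rank
    rw [show rank P.1 = (([0,1,2,1,0,2] : List ℕ).toFinset).card from rank_wordOf _ _]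
    decide
  rw [hP0, zero_add, mk_W, mk_W] at h
  exact h

lemma wcl_diag (d : α) : wcl τ d d = 0 := by
  have hc1 : ∀ x ∈ [0,1,0,2,1,2], List.count x ([0,1,0,2,1,2] : List ℕ) = 2 := by decide
  have hc2 : ∀ x ∈ [1,0,2,0,2,1], List.count x ([1,0,2,0,2,1] : List ℕ) = 2 := by decide
  have hc3 : ∀ x ∈ [0,0,2,2], List.count x ([0,0,2,2] : List ℕ) = 2 := by decide
  have hc4 : ∀ x ∈ [1,0,0,1], List.count x ([1,0,0,1] : List ℕ) = 2 := by decide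
  have hc5 : ∀ x ∈ [1,2,2,1], List.count x ([1,2,2,1] : List ℕ) = 2 := by decide
  set P1 : NP α 1 := NPof [0,1,0,2,1,2] (fun _ => d) hc1 with hP1def
  set Q1 : NP α 1 := NPof [1,0,2,0,2,1] (fun _ => d) hc2 with hQ1def
  set P3 : NP α 1 := NPof [0,0,2,2] (fun _ => d) hc3 with hP3def
  set Q2 : NP α 1 := NPof [1,0,0,1] (fun _ => d) hc4 with hQ2def
  set Q4 : NP α 1 := NPof [1,2,2,1] (fun _ => d) hc5 with hQ4def
  have h := mk_H3 (τ := τ) (p1 := P1) (p2 := Wnp 0 1 (by omega) d d)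
    (p3 := P3) (p4 := Wnp 1 2 (by omega) d d) (q1 := Q1) (q2 := Q2)
    (q3 := Wnp 0 2 (by omega) d d) (q4 := Q4)
    (x := []) (y := []) (z := []) (t := []) (i := 0) (j := 1) (k := 2) (d := d)
    (by rfl) (by rw [Wnp_val]; rfl) (by rfl) (by rw [Wnp_val]; rfl) (by rfl) (by rfl)
    (by rw [Wnp_val]; rfl) (by rfl)
  have e1 : mkG τ (FreeAbelianGroup.of P1) = 0 := by
    apply mk_rank
    rw [show rank P1.1 = (([0,1,0,2,1,2] : List ℕ).toFinset).card from rank_wordOf _ _]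
    decide
  have e2 : mkG τ (FreeAbelianGroup.of Q1) = 0 := by
    apply mk_rank
    rw [show rank Q1.1 = (([1,0,2,0,2,1] : List ℕ).toFinset).card from rank_wordOf _ _]
    decide
  have e3 : mkG τ (FreeAbelianGroup.of P3) = 0 :=
    mk_H1 (x := []) (y := [some (2,d), some (2,d)]) (i := 0) (a := d) (by rfl)
  have e4 : mkG τ (FreeAbelianGroup.of Q2) = 0 :=
    mk_H1 (x := [some (1,d)]) (y := [some (1,d)]) (i := 0) (a := d) (by rfl)
  have e5 : mkG τ (FreeAbelianGroup.of Q4) = 0 :=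
    mk_H1 (x := [some (1,d)]) (y := [some (1,d)]) (i := 2) (a := d) (by rfl)
  rw [e1, e2, e3, e4, e5, mk_W, mk_W, mk_W] at h
  calc wcl τ d d = 0 + wcl τ d d + 0 + wcl τ d d - 0 - 0 - wcl τ d d - 0 := by abel
  _ = 0 := h

lemma wcl_tau_right (hτ : Function.Involutive τ) (c b : α) :
    wcl τ c (τ b) = - wcl τ c b :=
  eq_neg_of_add_eq_zero_left (wcl_add_left hτ c (τ b) b rfl)

lemma wcl_tau_left (hτ : Function.Involutive τ) (c b : α) :
    wcl τ (τ b) c = - wcl τ b c :=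
  eq_neg_of_add_eq_zero_left (wcl_add_right hτ c (τ b) b rfl)

lemma wcl_two_left (hτ : Function.Involutive τ) {u : α} (hu : τ u = u) (c : α) :
    wcl τ u c + wcl τ u c = 0 := by
  have := wcl_add_right hτ c u u hu.symm
  exact this

lemma wcl_two_right (hτ : Function.Involutive τ) {u : α} (hu : τ u = u) (c : α) :
    wcl τ c u + wcl τ c u = 0 := wcl_add_left hτ c u u hu.symm

lemma wcl_rep (hτ : Function.Involutive τ) (a b : α) :
    wcl τ a b = (sgn τ a * sgn τ b) • wcl τ (rep τ a) (rep τ b) := by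
  by_cases ha : inB τ a <;> by_cases hb : inB τ b
  · rw [rep_eq_of_inB ha, rep_eq_of_inB hb, sgn, if_pos ha, sgn, if_pos hb]
    simp
  · rw [rep_eq_of_inB ha, sgn, if_pos ha, sgn, if_neg hb, rep, if_neg hb,
      wcl_tau_right hτ]
    simp
  · rw [rep_eq_of_inB hb, sgn, if_neg ha, sgn, if_pos hb, rep, if_neg ha,
      wcl_tau_left hτ]
    simp
  · rw [sgn, if_neg ha, sgn, if_neg hb, rep, if_neg ha, rep, if_neg hb,
      wcl_tau_left hτ, wcl_tau_right hτ]
    simp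

def Ecl (τ : α → α) : Gn α τ (Sdiag α) 1 2 := mkG τ (FreeAbelianGroup.of Enp)

def wF (f : Fpt τ) : Gn α τ (Sdiag α) 1 2 := wcl τ f.1.1.1 f.1.2.1
def wT (t : Tpt τ) : Gn α τ (Sdiag α) 1 2 := wcl τ t.1.1.1 t.1.2.1

lemma wT_two (hτ : Function.Involutive τ) (t : Tpt τ) : wT t + wT t = 0 := by
  rcases not_and_or.1 t.2.2 with hx | hy
  · exact wcl_two_left hτ (not_not.1 hx) _
  · exact wcl_two_right hτ (not_not.1 hy) _

lemma zmod_val_smul_add {G : Type} [AddCommGroup G] (g : G) (hg : g + g = 0)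
    (z w : ZMod 2) : (z + w).val • g = z.val • g + w.val • g := by
  have key : ∀ z w : ZMod 2, z.val + w.val = (z + w).val + 2 * (z.val * w.val) := by decide
  have h2 : (2 : ℕ) • g = 0 := by rw [two_nsmul]; exact hg
  have e : (2 * (z.val * w.val)) • g = 0 := by
    rw [mul_comm 2 (z.val * w.val), mul_smul, h2, smul_zero]
  calc (z + w).val • g = (z + w).val • g + (2 * (z.val * w.val)) • g := by
        rw [e, add_zero]
  _ = ((z + w).val + 2 * (z.val * w.val)) • g := (add_nsmul g _ _).symm
  _ = (z.val + w.val) • g := by rw [← key]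
  _ = z.val • g + w.val • g := add_nsmul g _ _

def chi (hτ : Function.Involutive τ) : Nt τ →+ Gn α τ (Sdiag α) 1 2 :=
  AddMonoidHom.mk' (fun v => v.1 • Ecl τ + (∑ f : Fpt τ, v.2.1 f • wF f)
    + (∑ t : Tpt τ, (v.2.2 t).val • wT t))
    (by
      intro v w
      simp only [Prod.fst_add, Prod.snd_add, Pi.add_apply]
      have h2 : ∑ f : Fpt τ, (v.2.1 f + w.2.1 f) • wF f =
          (∑ f : Fpt τ, v.2.1 f • wF f) + (∑ f : Fpt τ, w.2.1 f • wF f) := by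
        rw [← Finset.sum_add_distrib]
        exact Finset.sum_congr rfl (fun f _ => add_smul _ _ _)
      have h3 : ∑ t : Tpt τ, ((v.2.2 t + w.2.2 t).val) • wT t =
          (∑ t : Tpt τ, (v.2.2 t).val • wT t) + (∑ t : Tpt τ, (w.2.2 t).val • wT t) := by
        rw [← Finset.sum_add_distrib]
        exact Finset.sum_congr rfl (fun t _ => zmod_val_smul_add _ (wT_two hτ t) _ _)
      rw [add_smul, h2, h3]
      abel)

lemma chi_apply (hτ : Function.Involutive τ) (v : Nt τ) :
    chi hτ v = v.1 • Ecl τ + (∑ f : Fpt τ, v.2.1 f • wF f)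
      + (∑ t : Tpt τ, (v.2.2 t).val • wT t) := rfl

lemma chi_z (hτ : Function.Involutive τ) (z : ℤ) :
    chi hτ ((z, 0) : Nt τ) = z • Ecl τ := by
  rw [chi_apply]
  simp

lemma chi_single_F (hτ : Function.Involutive τ) (s : ℤ) (f0 : Fpt τ) :
    chi hτ ((0, (s • Pi.single f0 1, 0)) : Nt τ) = s • wF f0 := by
  rw [chi_apply]
  have h1 : ∑ f : Fpt τ, ((s • Pi.single f0 1 : Fpt τ → ℤ)) f • wF f = s • wF f0 := by
    rw [Finset.sum_eq_single f0]
    · simp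
    · intro f _ hf
      rw [Pi.smul_apply, Pi.single_eq_of_ne hf]
      simp
    · intro h
      exact absurd (Finset.mem_univ f0) h
  rw [h1]
  simp

lemma chi_single_T (hτ : Function.Involutive τ) (t0 : Tpt τ) :
    chi hτ ((0, (0, Pi.single t0 1)) : Nt τ) = wT t0 := by
  rw [chi_apply]
  have h1 : ∑ t : Tpt τ, (((Pi.single t0 1 : Tpt τ → ZMod 2)) t).val • wT t = wT t0 := by
    rw [Finset.sum_eq_single t0]
    · rw [Pi.single_eq_same, show ZMod.val (1 : ZMod 2) = 1 from rfl, one_smul]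
    · intro t _ ht
      rw [Pi.single_eq_of_ne ht]
      simp
    · intro h
      exact absurd (Finset.mem_univ t0) h
  rw [h1]
  simp

lemma sgn_mul_cases (a b : α) :
    sgn τ a * sgn τ b = 1 ∨ sgn τ a * sgn τ b = -1 := by
  rw [sgn, sgn]
  split_ifs <;> norm_num

lemma wcl_two_rep (hτ : Function.Involutive τ) (a b : α)
    (hf : ¬(τ a ≠ a ∧ τ b ≠ b)) :
    wcl τ (rep τ a) (rep τ b) + wcl τ (rep τ a) (rep τ b) = 0 := by
  rcases not_and_or.1 hf with hx | hy
  · exact wcl_two_left hτ (not_not.1 (fun hc => hx ((free_rep hτ a).1 hc))) _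
  · exact wcl_two_right hτ (not_not.1 (fun hc => hy ((free_rep hτ b).1 hc))) _

lemma chi_mg (hτ : Function.Involutive τ) (a b : α) :
    chi hτ ((0, mg hτ a b) : Nt τ) = wcl τ a b := by
  rw [mg]
  split_ifs with h hf
  · have hrr : rep τ a = rep τ b := congrArg Subtype.val h
    rw [show ((0 : ℤ), (0 : Mt τ)) = (0 : Nt τ) from rfl, map_zero,
      wcl_rep hτ a b, hrr, wcl_diag]
    simp
  · rw [chi_single_F hτ]
    rw [wcl_rep hτ a b]
    rfl
  · rw [chi_single_T hτ]
    have hwt : wT (⟨(repB hτ a, repB hτ b), h, fun hc =>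
        hf ⟨(free_rep hτ a).1 hc.1, (free_rep hτ b).1 hc.2⟩⟩ : Tpt τ) =
        wcl τ (rep τ a) (rep τ b) := rfl
    rw [hwt, wcl_rep hτ a b]
    rcases sgn_mul_cases (τ := τ) a b with hs | hs
    · rw [hs, one_smul]
    · rw [hs, neg_one_zsmul]
      exact (neg_eq_of_add_eq_zero_left (wcl_two_rep hτ a b hf)).symm

lemma count2_eq (n m1 m2 : ℕ) : List.count n [m1,m2] =
    (if m1 = n then 1 else 0) + (if m2 = n then 1 else 0) := by
  simp only [List.count_cons, List.count_nil, beq_iff_eq]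
  split_ifs <;> omega

lemma map_some_occs {q : NPhrase α} (h : ∀ s ∈ q, ∃ v, s = some v) :
    (occs q).map some = q := by
  induction q with
  | nil => rfl
  | cons s tq ih =>
    obtain ⟨v, rfl⟩ := h s List.mem_cons_self
    have : occs (some v :: tq) = v :: occs tq := by simp [occs, List.filterMap_cons]
    rw [this, List.map_cons, ih (fun s hs => h s (List.mem_cons_of_mem _ hs))]

lemma all_some (p : NP α 1) : ∀ s ∈ p.1, ∃ v, s = some v := by
  have h := p.2.2
  rw [comps] at h
  have h0 : p.1.countP (fun s => s.isNone) = 0 := by omega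
  rw [List.countP_eq_zero] at h0
  intro s hs
  rcases s with _ | v
  · exact absurd (by simp) (h0 none hs)
  · exact ⟨v, rfl⟩

lemma len_eq (p : NP α 1) : (occs p.1).length = 2 * rank p.1 := by
  set l := (occs p.1).map Prod.fst with hl
  have h1 : ∑ x ∈ l.toFinset, l.count x = l.length := by
    have := Multiset.toFinset_sum_count_eq (l : Multiset ℕ)
    simpa using this
  have h2 : ∀ x ∈ l.toFinset, l.count x = 2 := fun x hx => p.2.1.1 x hx
  have h3 : l.length = 2 * l.toFinset.card := by
    rw [← h1, Finset.sum_congr rfl h2, Finset.sum_const, smul_eq_mul, mul_comm]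
  have h4 : (occs p.1).length = l.length := by rw [hl, List.length_map]
  rw [h4, h3]
  rfl

lemma chi_val (hτ : Function.Involutive τ) (p : NP α 1) :
    chi hτ (val hτ p.1) = mkG τ (FreeAbelianGroup.of p) := by
  have hlen2 : (occs p.1).length = 2 * rank p.1 := len_eq p
  by_cases hrgt : 2 < rank p.1
  · rw [val_rank hτ hrgt, map_zero, mk_rank hrgt]
  push_neg at hrgt
  have hple : p.1 = (occs p.1).map some := (map_some_occs (all_some p)).symm
  rcases ho : occs p.1 with _ | ⟨⟨n1,u1⟩, L1⟩
  · have hp1 : p.1 = [] := by rw [hple, ho]; rfl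
    have hpE : p = Enp := Subtype.ext (by rw [hp1]; rfl)
    have hv : val hτ p.1 = ((1 : ℤ), (0 : Mt τ)) := by
      have hm : mval hτ p.1 = 0 := by rw [hp1]; simp [mval]
      rw [val, hm, fval, if_pos hp1]
    rw [hv, hpE, chi_z]
    rw [Ecl]
    simp
  · rcases L1 with _ | ⟨⟨n2,u2⟩, L2⟩
    · exfalso
      rw [ho] at hlen2
      simp at hlen2
      omega
    rcases L2 with _ | ⟨⟨n3,u3⟩, L3⟩
    · -- length 2
      have hp1 : p.1 = [some (n1,u1), some (n2,u2)] := by rw [hple, ho]; rfl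
      have hmap : (occs p.1).map Prod.fst = [n1, n2] := by rw [ho]; rfl
      have hc1 : List.count n1 [n1, n2] = 2 := by
        have := p.2.1.1 n1 (by rw [lettersOf, hmap]; simp)
        rwa [hmap] at this
      have hn : n2 = n1 := by
        by_contra hne
        rw [count2_eq, if_pos rfl, if_neg hne] at hc1
        omega
      subst hn
      have hu : u2 = u1 := p.2.1.2 n2 u2 u1 (by rw [ho]; simp) (by rw [ho]; simp)
      subst hu
      rw [mk_H1 (τ := τ) (x := []) (y := []) (i := n2) (a := u2) (by rw [hp1]; rfl)]
      have hv : val hτ p.1 = 0 :=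
        val_zero_of hτ (by rw [hp1]; simp) (by rw [hp1]; exact mval_of_len hτ (by simp))
      rw [hv, map_zero]
    rcases L3 with _ | ⟨⟨n4,u4⟩, L4⟩
    · exfalso
      rw [ho] at hlen2
      simp at hlen2
      omega
    rcases L4 with _ | ⟨s5, L5⟩
    swap
    · exfalso
      rw [ho] at hlen2
      simp at hlen2
      omega
    -- length 4
    have hp1 : p.1 = [some (n1,u1), some (n2,u2), some (n3,u3), some (n4,u4)] := by
      rw [hple, ho]; rfl
    have hmap : (occs p.1).map Prod.fst = [n1, n2, n3, n4] := by rw [ho]; rfl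
    have hc1 : List.count n1 [n1,n2,n3,n4] = 2 := by
      have := p.2.1.1 n1 (by rw [lettersOf, hmap]; simp)
      rwa [hmap] at this
    have hc2 : List.count n2 [n1,n2,n3,n4] = 2 := by
      have := p.2.1.1 n2 (by rw [lettersOf, hmap]; simp)
      rwa [hmap] at this
    by_cases h12 : n1 = n2
    · -- AA??
      have h31 : n3 ≠ n1 := by
        intro e
        rw [count4_eq] at hc1
        split_ifs at hc1 <;> omega
      have hu : u2 = u1 := p.2.1.2 n1 u2 u1 (by rw [ho, ← h12]; simp) (by rw [ho]; simp)
      rw [mk_H1 (τ := τ) (x := []) (y := [some (n3,u3), some (n4,u4)]) (i := n1) (a := u1)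
        (by rw [hp1, h12, hu]; rfl)]
      have hv : val hτ p.1 = 0 := by
        refine val_zero_of hτ (by rw [hp1]; simp) ?_
        rw [hp1, mval_quad, if_neg]
        rintro ⟨e1, -, -⟩
        exact h31 e1.symm
      rw [hv, map_zero]
    · by_cases h31 : n3 = n1
      · -- ABAB
        have h42 : n4 = n2 := by
          rw [count4_eq] at hc2
          by_contra h
          split_ifs at hc2 <;> omega
        have hu3 : u3 = u1 := p.2.1.2 n1 u3 u1 (by rw [ho, h31]; simp) (by rw [ho]; simp)
        have hu4 : u4 = u2 := p.2.1.2 n2 u4 u2 (by rw [ho, h42]; simp) (by rw [ho]; simp)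
        have hww : p = Wnp n1 n2 h12 u1 u2 :=
          Subtype.ext (by rw [hp1, Wnp_val, h31, h42, hu3, hu4])
        have hf0 : fval p.1 = 0 := by rw [hp1, fval, if_neg (by simp)]
        have hm : mval hτ p.1 = mg hτ u1 u2 := by
          rw [hp1, h31, h42, mval_quad, if_pos ⟨rfl, rfl, h12⟩]
        have hv : val hτ p.1 = ((0 : ℤ), mg hτ u1 u2) := by rw [val, hf0, hm]
        rw [hv, chi_mg hτ u1 u2, hww, mk_W n1 n2 h12]
      · -- ABBA
        have h41 : n4 = n1 := by
          rw [count4_eq] at hc1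
          by_contra h
          split_ifs at hc1 <;> omega
        have h32 : n3 = n2 := by
          rw [count4_eq] at hc2
          by_contra h
          split_ifs at hc2 <;> omega
        have hu3 : u3 = u2 := p.2.1.2 n2 u3 u2 (by rw [ho, h32]; simp) (by rw [ho]; simp)
        rw [mk_H1 (τ := τ) (x := [some (n1,u1)]) (y := [some (n4,u4)]) (i := n2) (a := u2)
          (by rw [hp1, h32, hu3]; rfl)]
        have hv : val hτ p.1 = 0 := by
          refine val_zero_of hτ (by rw [hp1]; simp) ?_
          rw [hp1, mval_quad, if_neg]
          rintro ⟨e1, -, -⟩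
          exact h31 e1.symm
        rw [hv, map_zero]

lemma repB_of_inB (hτ : Function.Involutive τ) {u : α} (hu : inB τ u) :
    repB hτ u = ⟨u, hu⟩ := Subtype.ext (rep_eq_of_inB hu)

lemma mg_eval_F (hτ : Function.Involutive τ) (f : Fpt τ) :
    mg hτ f.1.1.1 f.1.2.1 = ((Pi.single f 1 : Fpt τ → ℤ), (0 : Tpt τ → ZMod 2)) := by
  obtain ⟨⟨⟨u, hu⟩, ⟨v, hv⟩⟩, hne, hfu, hfv⟩ := f
  rw [mg]
  simp only [repB_of_inB hτ hu, repB_of_inB hτ hv]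
  rw [dif_neg hne, dif_pos ⟨hfu, hfv⟩,
    show sgn τ u = 1 from if_pos hu, show sgn τ v = 1 from if_pos hv]
  rw [one_mul, one_smul]

lemma mg_eval_T (hτ : Function.Involutive τ) (t : Tpt τ) :
    mg hτ t.1.1.1 t.1.2.1 = ((0 : Fpt τ → ℤ), (Pi.single t 1 : Tpt τ → ZMod 2)) := by
  obtain ⟨⟨⟨u, hu⟩, ⟨v, hv⟩⟩, hne, hnf⟩ := t
  rw [mg]
  simp only [repB_of_inB hτ hu, repB_of_inB hτ hv]
  rw [dif_neg hne, dif_neg hnf]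

lemma Psi_E (hτ : Function.Involutive τ) :
    Psi hτ (Ecl τ) = ((1 : ℤ), ((0 : Fpt τ → ℤ), (0 : Tpt τ → ZMod 2))) := by
  rw [Ecl, Psi_of]
  have hm : mval hτ (Enp (α := α)).1 = 0 := by
    show mval hτ [] = 0
    simp [mval]
  rw [val, hm, fval]
  rw [if_pos (show (Enp (α := α)).1 = [] from rfl)]
  rfl

lemma Psi_wcl (hτ : Function.Involutive τ) (a b : α) :
    Psi hτ (wcl τ a b) = ((0 : ℤ), mg hτ a b) := by
  rw [wcl, Psi_of, Wnp_val]
  have hm : mval hτ [some (0,a), some (1,b), some (0,a), some (1,b)] = mg hτ a b := by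
    rw [mval_quad, if_pos ⟨rfl, rfl, by omega⟩]
  rw [val, hm, fval, if_neg (by simp)]

def ins2 (τ : α → α) : (Fpt τ → ℤ) →+ Nt τ :=
  AddMonoidHom.mk' (fun x => ((0:ℤ), (x, (0 : Tpt τ → ZMod 2))))
    (fun a b => by rw [Prod.mk_add_mk, Prod.mk_add_mk, add_zero, add_zero])

def ins3 (τ : α → α) : (Tpt τ → ZMod 2) →+ Nt τ :=
  AddMonoidHom.mk' (fun x => ((0:ℤ), ((0 : Fpt τ → ℤ), x)))
    (fun a b => by rw [Prod.mk_add_mk, Prod.mk_add_mk, add_zero, add_zero])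

lemma PsiChi (hτ : Function.Involutive τ) (v : Nt τ) : Psi hτ (chi hτ v) = v := by
  obtain ⟨z, g, h⟩ := v
  rw [chi_apply, map_add, map_add, map_zsmul, map_sum, map_sum]
  have h1 : ∑ f : Fpt τ, Psi hτ (g f • wF f) = ins2 τ g := by
    have hterm : ∀ f : Fpt τ, Psi hτ (g f • wF f) = ins2 τ (Pi.single f (g f)) := by
      intro f
      rw [map_zsmul, wF, Psi_wcl hτ, mg_eval_F hτ]
      show g f • ((0:ℤ), ((Pi.single f 1 : Fpt τ → ℤ), (0 : Tpt τ → ZMod 2))) = _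
      rw [Prod.smul_mk, Prod.smul_mk, smul_zero, smul_zero, ← Pi.single_smul,
        smul_eq_mul, mul_one]
      rfl
    rw [Finset.sum_congr rfl (fun f _ => hterm f), ← map_sum, Finset.univ_sum_single]
  have h2 : ∑ t : Tpt τ, Psi hτ ((h t).val • wT t) = ins3 τ h := by
    have hterm : ∀ t : Tpt τ, Psi hτ ((h t).val • wT t) = ins3 τ (Pi.single t (h t)) := by
      intro t
      rw [map_nsmul, wT, Psi_wcl hτ, mg_eval_T hτ]
      show (h t).val • ((0:ℤ), ((0 : Fpt τ → ℤ), (Pi.single t 1 : Tpt τ → ZMod 2))) = _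
      rw [Prod.smul_mk, Prod.smul_mk, smul_zero, smul_zero, ← Pi.single_smul,
        show (h t).val • (1 : ZMod 2) = h t from by
          have : ∀ w : ZMod 2, w.val • (1 : ZMod 2) = w := by decide
          exact this (h t)]
      rfl
    rw [Finset.sum_congr rfl (fun t _ => hterm t), ← map_sum, Finset.univ_sum_single]
  rw [h1, h2, Psi_E hτ]
  rw [Prod.smul_mk, Prod.smul_mk, smul_zero, smul_zero, smul_eq_mul, mul_one]
  show ((z, ((0 : Fpt τ → ℤ), (0 : Tpt τ → ZMod 2))) : Nt τ)
      + (0, (g, 0)) + (0, (0, h)) = (z, (g, h))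
  rw [Prod.mk_add_mk, Prod.mk_add_mk, Prod.mk_add_mk, Prod.mk_add_mk]
  rw [add_zero, zero_add, add_zero, add_zero, zero_add, add_zero]

lemma chiPsi (hτ : Function.Involutive τ) (xg : Gn α τ (Sdiag α) 1 2) :
    chi hτ (Psi hτ xg) = xg := by
  refine QuotientAddGroup.induction_on xg ?_
  intro g
  show chi hτ (Psi hτ (mkG τ g)) = mkG τ g
  induction g using FreeAbelianGroup.induction_on with
  | zero => rw [map_zero, map_zero, map_zero]
  | of p => rw [Psi_of, chi_val]
  | neg p hp => rw [map_neg, map_neg, map_neg, hp]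
  | add x y hx hy => rw [map_add, map_add, map_add, hx, hy]

/-- The main isomorphism. -/
noncomputable def mainEquiv (hτ : Function.Involutive τ) :
    Gn α τ (Sdiag α) 1 2 ≃+ Nt τ :=
  { toFun := Psi hτ
    invFun := chi hτ
    left_inv := chiPsi hτ
    right_inv := PsiChi hτ
    map_add' := (Psi hτ).map_add }



abbrev FBt (τ : α → α) := {b : Bt τ // τ b.1 ≠ b.1}

lemma card_OS (hτ : Function.Involutive τ) :
    2 * (Finset.univ.filter (fun a : α => ea a < ea (τ a))).card
      = (Finset.univ.filter (fun a : α => τ a ≠ a)).card := by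
  classical
  set A := Finset.univ.filter (fun a : α => ea a < ea (τ a)) with hA
  set B := Finset.univ.filter (fun a : α => ea (τ a) < ea a) with hB
  have hdisj : Disjoint A B := by
    rw [Finset.disjoint_left]
    intro a ha hb
    rw [hA, Finset.mem_filter] at ha
    rw [hB, Finset.mem_filter] at hb
    omega
  have hunion : Finset.univ.filter (fun a : α => τ a ≠ a) = A ∪ B := by
    ext a
    rw [Finset.mem_union, hA, hB, Finset.mem_filter, Finset.mem_filter, Finset.mem_filter]
    constructor
    · intro ⟨hu, hne⟩
      rcases Nat.lt_or_ge (ea a) (ea (τ a)) with h | h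
      · exact Or.inl ⟨hu, h⟩
      · exact Or.inr ⟨hu, lt_of_le_of_ne h (fun e => hne (ea_inj e))⟩
    · rintro (⟨hu, h⟩ | ⟨hu, h⟩) <;> refine ⟨hu, fun e => ?_⟩ <;> rw [e] at h <;>
        exact lt_irrefl _ h
  have hbij : A.card = B.card := by
    refine Finset.card_bij (fun a _ => τ a) ?_ ?_ ?_
    · intro a ha
      rw [hA, Finset.mem_filter] at ha
      rw [hB, Finset.mem_filter]
      refine ⟨Finset.mem_univ _, ?_⟩
      rw [hτ a]
      exact ha.2
    · intro a _ b _ hab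
      exact hτ.injective hab
    · intro b hb
      rw [hB, Finset.mem_filter] at hb
      refine ⟨τ b, ?_, hτ b⟩
      rw [hA, Finset.mem_filter]
      refine ⟨Finset.mem_univ _, ?_⟩
      rw [hτ b]
      exact hb.2
  rw [hunion, Finset.card_union_of_disjoint hdisj, ← hbij]
  omega

lemma card_Bt (hτ : Function.Involutive τ) {k l : ℕ}
    (hk : k = (Finset.univ.filter (fun a : α => τ a = a)).card)
    (hl : 2 * l = (Finset.univ.filter (fun a : α => τ a ≠ a)).card) :
    Fintype.card (Bt τ) = l + k := by
  classical
  have h0 : Fintype.card (Bt τ) = (Finset.univ.filter (fun a : α => inB τ a)).card := by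
    convert Fintype.card_subtype (fun a : α => inB τ a) using 2
  have hsplit : Finset.univ.filter (fun a : α => inB τ a) =
      Finset.univ.filter (fun a : α => ea a < ea (τ a)) ∪
      Finset.univ.filter (fun a : α => τ a = a) := by
    ext a
    simp only [Finset.mem_union, Finset.mem_filter, Finset.mem_univ, true_and]
    rw [inB]
    tauto
  have hdisj : Disjoint (Finset.univ.filter (fun a : α => ea a < ea (τ a)))
      (Finset.univ.filter (fun a : α => τ a = a)) := by
    rw [Finset.disjoint_left]
    intro a ha hb
    rw [Finset.mem_filter] at ha hb
    rw [hb.2] at ha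
    exact lt_irrefl _ ha.2
  have hOS := card_OS (τ := τ) hτ
  rw [h0, hsplit, Finset.card_union_of_disjoint hdisj, ← hk]
  omega

lemma card_ne_pairs (X : Type) [Fintype X] :
    Fintype.card {p : X × X // p.1 ≠ p.2}
      = Fintype.card X * Fintype.card X - Fintype.card X := by
  classical
  have h0 : Fintype.card {p : X × X // p.1 ≠ p.2}
      = (Finset.univ.filter (fun p : X × X => p.1 ≠ p.2)).card := by
    convert Fintype.card_subtype (fun p : X × X => p.1 ≠ p.2) using 2
  have h1 : Finset.univ.filter (fun p : X × X => p.1 ≠ p.2) =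
      (Finset.univ : Finset X).offDiag := by
    ext p
    simp [Finset.mem_offDiag]
  rw [h0, h1, Finset.offDiag_card, Finset.card_univ]

def FptEquiv (τ : α → α) : Fpt τ ≃ {q : FBt τ × FBt τ // q.1 ≠ q.2} where
  toFun p := ⟨(⟨p.1.1, p.2.2.1⟩, ⟨p.1.2, p.2.2.2⟩),
    fun hc => p.2.1 (congrArg Subtype.val hc)⟩
  invFun q := ⟨(q.1.1.1, q.1.2.1), fun hc => q.2 (Subtype.ext hc), q.1.1.2, q.1.2.2⟩
  left_inv p := rfl
  right_inv q := rfl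

lemma card_FBt (hτ : Function.Involutive τ) {l : ℕ}
    (hl : 2 * l = (Finset.univ.filter (fun a : α => τ a ≠ a)).card) :
    Fintype.card (FBt τ) = l := by
  classical
  have e := Equiv.subtypeSubtypeEquivSubtypeInter (fun a : α => inB τ a)
    (fun a : α => τ a ≠ a)
  have h0 : Fintype.card (FBt τ) = Fintype.card {a : α // inB τ a ∧ τ a ≠ a} :=
    Fintype.card_congr e
  have h1 : Fintype.card {a : α // inB τ a ∧ τ a ≠ a}
      = (Finset.univ.filter (fun a : α => inB τ a ∧ τ a ≠ a)).card := by
    convert Fintype.card_subtype (fun a : α => inB τ a ∧ τ a ≠ a) using 2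
  have h2 : Finset.univ.filter (fun a : α => inB τ a ∧ τ a ≠ a)
      = Finset.univ.filter (fun a : α => ea a < ea (τ a)) := by
    ext a
    simp only [Finset.mem_filter, Finset.mem_univ, true_and]
    constructor
    · rintro ⟨h1, h2⟩
      exact h1.resolve_left h2
    · intro h
      exact ⟨Or.inr h, fun e => by rw [e] at h; exact lt_irrefl _ h⟩
  have hOS := card_OS (τ := τ) hτ
  rw [h0, h1, h2]
  omega

lemma card_Fpt (hτ : Function.Involutive τ) {l : ℕ}
    (hl : 2 * l = (Finset.univ.filter (fun a : α => τ a ≠ a)).card) :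
    Fintype.card (Fpt τ) = l * l - l := by
  have h2 : Fintype.card {q : FBt τ × FBt τ // q.1 ≠ q.2} =
      Fintype.card (FBt τ) * Fintype.card (FBt τ) - Fintype.card (FBt τ) := by
    convert card_ne_pairs (FBt τ) using 2
  rw [Fintype.card_congr (FptEquiv τ), h2, card_FBt hτ hl]

def sumEquiv (τ : α → α) : Fpt τ ⊕ Tpt τ ≃ {p : Bt τ × Bt τ // p.1 ≠ p.2} where
  toFun := Sum.elim (fun f => ⟨f.1, f.2.1⟩) (fun t => ⟨t.1, t.2.1⟩)
  invFun q := if h : (τ q.1.1.1 ≠ q.1.1.1 ∧ τ q.1.2.1 ≠ q.1.2.1)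
    then Sum.inl ⟨q.1, q.2, h.1, h.2⟩ else Sum.inr ⟨q.1, q.2, h⟩
  left_inv := by
    rintro (f | t)
    · simp only [Sum.elim_inl]
      exact dif_pos ⟨f.2.2.1, f.2.2.2⟩
    · simp only [Sum.elim_inr]
      exact dif_neg t.2.2
  right_inv q := by
    dsimp only
    by_cases h : (τ q.1.1.1 ≠ q.1.1.1 ∧ τ q.1.2.1 ≠ q.1.2.1)
    · rw [dif_pos h]
      rfl
    · rw [dif_neg h]
      rfl

lemma card_Tpt (hτ : Function.Involutive τ) {k l : ℕ}
    (hk : k = (Finset.univ.filter (fun a : α => τ a = a)).card)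
    (hl : 2 * l = (Finset.univ.filter (fun a : α => τ a ≠ a)).card) :
    Fintype.card (Tpt τ) = k * k + 2 * (k * l) - k := by
  have hsum : Fintype.card (Fpt τ) + Fintype.card (Tpt τ)
      = Fintype.card (Bt τ) * Fintype.card (Bt τ) - Fintype.card (Bt τ) := by
    have h2 : Fintype.card {q : Bt τ × Bt τ // q.1 ≠ q.2} =
        Fintype.card (Bt τ) * Fintype.card (Bt τ) - Fintype.card (Bt τ) := by
      convert card_ne_pairs (Bt τ) using 2
    rw [← Fintype.card_sum, Fintype.card_congr (sumEquiv τ), h2]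
  rw [card_Bt hτ hk hl, card_Fpt hτ hl] at hsum
  have hmul : (l + k) * (l + k) = l * l + 2 * (k * l) + k * k := by ring
  have h1 : l ≤ l * l := by
    rcases Nat.eq_zero_or_pos l with h | h
    · simp [h]
    · calc l = 1 * l := (one_mul l).symm
      _ ≤ l * l := Nat.mul_le_mul_right l h
  have h3 : k ≤ k * k := by
    rcases Nat.eq_zero_or_pos k with h | h
    · simp [h]
    · calc k = 1 * k := (one_mul k).symm
      _ ≤ k * k := Nat.mul_le_mul_right k h
  have h2 : l + k ≤ (l + k) * (l + k) := by
    rcases Nat.eq_zero_or_pos (l + k) with h | h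
    · simp [h]
    · calc l + k = 1 * (l + k) := (one_mul _).symm
      _ ≤ (l + k) * (l + k) := Nat.mul_le_mul_right _ h
  omega

def piCongrAdd (A : Type) [AddCommMonoid A] {X Y : Type} (e : X ≃ Y) :
    (X → A) ≃+ (Y → A) where
  toFun g := g ∘ e.symm
  invFun g := g ∘ e
  left_inv g := by funext x; simp
  right_inv g := by funext y; simp
  map_add' a b := rfl

def consEquiv (n : ℕ) : ℤ × (Fin n → ℤ) ≃+ (Fin (n + 1) → ℤ) where
  toFun v := Fin.cons v.1 v.2
  invFun g := (g 0, fun i => g i.succ)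
  left_inv v := by simp
  right_inv g := by
    funext i
    refine Fin.cases ?_ ?_ i <;> simp
  map_add' v w := by
    funext i
    refine Fin.cases ?_ ?_ i <;> simp

end G2Aux

/-- let `(α,τ,S)` be homotopy data with α finite, `S` diagonal
(`S = {(a,a,a) : a ∈ α}`), `l` the number of free orbits of τ on α (so `2l`
non-fixed points) and `k` the number of fixed points of τ.  Then
`G_2(α,τ,S,1) ≅ ℤ^(l²−l+1) ⊕ (ℤ/2)^(k²+2kl−k)`. -/
theorem G2_diagonal_S_iso (α : Type) [Fintype α]
    (τ : α → α) (hτ : Function.Involutive τ) (k l : ℕ)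
    (hk : k = (Finset.univ.filter (fun a : α => τ a = a)).card)
    (hl : 2 * l = (Finset.univ.filter (fun a : α => τ a ≠ a)).card) :
    Nonempty (Gn α τ {s | ∃ a : α, s = (a, a, a)} 1 2 ≃+
      (Fin (l * l - l + 1) → ℤ) × (Fin (k * k + 2 * k * l - k) → ZMod 2)) := by
  have hcF : Fintype.card (Fpt τ) = l * l - l := card_Fpt hτ hl
  have hcT : Fintype.card (Tpt τ) = k * k + 2 * k * l - k := by
    rw [card_Tpt hτ hk hl]
    ring_nf
  have e1 : Fpt τ ≃ Fin (l * l - l) := Fintype.equivFinOfCardEq hcF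
  have e2 : Tpt τ ≃ Fin (k * k + 2 * k * l - k) := Fintype.equivFinOfCardEq hcT
  refine ⟨(mainEquiv hτ).trans ?_⟩
  refine (AddEquiv.prodAssoc.symm).trans ?_
  refine (AddEquiv.prodCongr (AddEquiv.prodCongr (AddEquiv.refl ℤ) (piCongrAdd ℤ e1))
    (piCongrAdd (ZMod 2) e2)).trans ?_
  exact AddEquiv.prodCongr (consEquiv (l * l - l)) (AddEquiv.refl _)
end
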